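/- arXiv:2403.07295 — 3 statements merged into one kernel-verified Lean document; each statement's English description precedes it below -/
import Mathlib

section
/- Let d ≥ 1 be an integer, let Z be a nonzero d×d real symmetric positive semidefinite matrix, and let η > 0. Set α := 1/2 if rank(Z) < d and α := 1 if rank(Z) = d. Then there exists C_P > 0 such that for every d×d real symmetric positive semidefinite matrix Y with ‖Y‖_F ≤ η, the distance (in Frobenius norm) from Y to the set {X : X is d×d real symmetric positive semidefinite and tr(X·Z) = 0} is at most C_P · (tr(Y·Z))^α. -/
open Matrix

set_option maxHeartbeats 1000000

section aux
variable {n : Type*} [Fintype n] [DecidableEq n]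

lemma psd_diag_nonneg {M : Matrix n n ℝ} (hM : M.PosSemidef) (i : n) : 0 ≤ M i i := by
  exact hM.diag_nonneg

lemma psd_trace_nonneg {M : Matrix n n ℝ} (hM : M.PosSemidef) : 0 ≤ M.trace :=
  Finset.sum_nonneg fun i _ => psd_diag_nonneg hM i

lemma psd_diag_le_trace {M : Matrix n n ℝ} (hM : M.PosSemidef) (i : n) : M i i ≤ M.trace :=
  Finset.single_le_sum (fun j _ => psd_diag_nonneg hM j) (Finset.mem_univ i)

lemma psd_trace_mul_nonneg {A B : Matrix n n ℝ} (hA : A.PosSemidef) (hB : B.PosSemidef) :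
    0 ≤ (A * B).trace := by
  open MatrixOrder in set W := CFC.sqrt B with hWdef
  have hW : W * W = B := by open MatrixOrder in exact CFC.sqrt_mul_sqrt_self B hB.nonneg
  have hWs : Wᴴ = W := by open MatrixOrder in exact (CFC.sqrt_nonneg B).posSemidef.1
  have h1 : A * B = A * W * W := by rw [← hW]; noncomm_ring
  have h2 : (A * W * W).trace = (W * A * W).trace := by
    rw [trace_mul_cycle]
  have hpsd : (W * A * W).PosSemidef := by
    have := hA.mul_mul_conjTranspose_same W
    rwa [hWs] at this
  rw [h1, h2]
  exact psd_trace_nonneg hpsd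

lemma psd_trace_mul_le {A B : Matrix n n ℝ} (hA : A.PosSemidef) (hB : B.PosSemidef) :
    (A * B).trace ≤ A.trace * B.trace := by
  set V : Matrix n n ℝ := (hA.1.eigenvectorUnitary : Matrix n n ℝ) with hVdef
  set μ : n → ℝ := hA.1.eigenvalues with hmu
  have hVV : V * Vᴴ = 1 := by
    rw [← Matrix.star_eq_conjTranspose]
    exact mem_unitaryGroup_iff.mp (hA.1.eigenvectorUnitary).2
  have hVV' : Vᴴ * V = 1 := by
    rw [← Matrix.star_eq_conjTranspose]
    exact mem_unitaryGroup_iff'.mp (hA.1.eigenvectorUnitary).2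
  have hspec : A = V * diagonal μ * Vᴴ := by
    have := hA.1.spectral_theorem
    rwa [RCLike.ofReal_real_eq_id, Function.id_comp, Unitary.conjStarAlgAut_apply, Matrix.star_eq_conjTranspose] at this
  set M : Matrix n n ℝ := Vᴴ * B * V with hMdef
  have hMpsd : M.PosSemidef := hB.conjTranspose_mul_mul_same V
  have hMtr : M.trace = B.trace := by
    rw [hMdef, trace_mul_cycle, hVV, one_mul]
  have htrA : A.trace = ∑ i, μ i := by
    rw [hspec, trace_mul_cycle, hVV', one_mul, trace_diagonal]
  have hAB : (A * B).trace = (M * diagonal μ).trace := by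
    have e1 : A * B = V * (diagonal μ * Vᴴ * B) := by rw [hspec]; noncomm_ring
    have e2 : diagonal μ * Vᴴ * B * V = diagonal μ * M := by rw [hMdef]; noncomm_ring
    rw [e1, trace_mul_comm, e2, trace_mul_comm]
  have hdiag : (M * diagonal μ).trace = ∑ i, M i i * μ i := by
    simp [Matrix.trace, Matrix.diag, Matrix.mul_apply, Matrix.diagonal_apply, mul_ite, mul_zero]
  rw [hAB, hdiag, htrA, Finset.sum_mul]
  refine Finset.sum_le_sum fun i _ => ?_
  calc M i i * μ i = μ i * M i i := mul_comm _ _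
    _ ≤ μ i * B.trace := mul_le_mul_of_nonneg_left ((psd_diag_le_trace hMpsd i).trans hMtr.le)
        (hA.eigenvalues_nonneg i)

end aux

/-- Proposition 2.1 (error bound for the PSD cone): for nonzero PSD `Z` and `η > 0` there is
`C_P > 0` such that every PSD `Y` with `‖Y‖_F ≤ η` satisfies
`dist(Y, S₊ᵈ ∩ {Z}^⊥) ≤ C_P * (tr (Y*Z))^α` where `α = 1/2` if `rank Z < d` and `α = 1`
otherwise. -/
theorem stmt_2 (d : ℕ) (hd : 1 ≤ d) (Z : Matrix (Fin d) (Fin d) ℝ)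
    (hZ : Z.PosSemidef) (hZ0 : Z ≠ 0) (η : ℝ) (hη : 0 < η) :
    ∃ C : ℝ, 0 < C ∧ ∀ Y : Matrix (Fin d) (Fin d) ℝ,
      Y.PosSemidef → Real.sqrt ((Y * Y).trace) ≤ η →
      sInf {r : ℝ | ∃ X : Matrix (Fin d) (Fin d) ℝ,
          X.PosSemidef ∧ (X * Z).trace = 0 ∧ r = Real.sqrt (((Y - X) * (Y - X)).trace)}
        ≤ C * ((Y * Z).trace) ^ (if Z.rank < d then (1 : ℝ) / 2 else 1) := by
  classical
  set μ : Fin d → ℝ := hZ.1.eigenvalues with hmu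
  set V : Matrix (Fin d) (Fin d) ℝ := (hZ.1.eigenvectorUnitary : Matrix (Fin d) (Fin d) ℝ)
    with hVdef
  have hVV : V * Vᴴ = 1 := by
    rw [← Matrix.star_eq_conjTranspose]
    exact mem_unitaryGroup_iff.mp (hZ.1.eigenvectorUnitary).2
  have hVV' : Vᴴ * V = 1 := by
    rw [← Matrix.star_eq_conjTranspose]
    exact mem_unitaryGroup_iff'.mp (hZ.1.eigenvectorUnitary).2
  have hspec : Z = V * diagonal μ * Vᴴ := by
    have := hZ.1.spectral_theorem
    rwa [RCLike.ofReal_real_eq_id, Function.id_comp, Unitary.conjStarAlgAut_apply, Matrix.star_eq_conjTranspose] at this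
  have hconj : ∀ f g : Fin d → ℝ, (V * diagonal f * Vᴴ) * (V * diagonal g * Vᴴ)
      = V * diagonal (fun i => f i * g i) * Vᴴ := by
    intro f g
    have e : (V * diagonal f * Vᴴ) * (V * diagonal g * Vᴴ)
        = V * (diagonal f * (Vᴴ * V) * (diagonal g * Vᴴ)) := by noncomm_ring
    rw [e, hVV', mul_one, ← Matrix.mul_assoc (diagonal f), diagonal_mul_diagonal,
      ← Matrix.mul_assoc]
  set ind : Fin d → ℝ := fun i => if μ i = 0 then 0 else 1 with hind
  set Q : Matrix (Fin d) (Fin d) ℝ := V * diagonal ind * Vᴴ with hQdef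
  have hQQ : Q * Q = Q := by
    rw [hQdef, hconj]
    have : (fun i => ind i * ind i) = ind := by
      funext i; by_cases h : μ i = 0 <;> simp [hind, h]
    rw [this]
  have hZQ : Z * Q = Z := by
    conv_lhs => rw [hspec, hQdef]
    rw [hconj]
    have : (fun i => μ i * ind i) = μ := by
      funext i; by_cases h : μ i = 0 <;> simp [hind, h]
    rw [this, ← hspec]
  have hQZ : Q * Z = Z := by
    conv_lhs => rw [hspec, hQdef]
    rw [hconj]
    have : (fun i => ind i * μ i) = μ := by
      funext i; by_cases h : μ i = 0 <;> simp [hind, h]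
    rw [this, ← hspec]
  have hQsym : Qᴴ = Q := by
    rw [hQdef]
    simp [Matrix.conjTranspose_mul, Matrix.diagonal_conjTranspose, Matrix.mul_assoc]
  have hQpsd : Q.PosSemidef := by
    have hdpsd : (diagonal ind).PosSemidef := posSemidef_diagonal_iff.mpr
      (fun i => by by_cases h : μ i = 0 <;> simp [hind, h])
    rw [hQdef]
    exact hdpsd.mul_mul_conjTranspose_same V
  set T : Finset (Fin d) := Finset.univ.filter (fun i => μ i ≠ 0) with hT
  have hTne : T.Nonempty := by
    by_contra h
    apply hZ0
    have hμ0 : μ = fun _ => 0 := by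
      funext i
      by_contra hi
      exact h ⟨i, by simp [hT, hi]⟩
    rw [hspec, hμ0]
    simp
  set lam : ℝ := T.inf' hTne μ with hlamdef
  obtain ⟨i₀, hi₀T, hlam_eq⟩ := T.exists_mem_eq_inf' hTne μ
  have hlam_pos : 0 < lam := by
    rw [hlamdef, hlam_eq]
    have h1 : μ i₀ ≠ 0 := by simpa [hT] using hi₀T
    exact lt_of_le_of_ne (hZ.eigenvalues_nonneg i₀) (Ne.symm h1)
  have hlam_le : ∀ i, μ i ≠ 0 → lam ≤ μ i := fun i hi =>
    Finset.inf'_le μ (by simp [hT, hi])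
  have hZlamQ : (Z - lam • Q).PosSemidef := by
    have hsmul : lam • Q = V * (lam • diagonal ind) * Vᴴ := by
      rw [hQdef]
      rw [show V * (lam • diagonal ind) * Vᴴ = lam • (V * diagonal ind * Vᴴ) from by
        rw [Matrix.mul_smul, Matrix.smul_mul]]
    have hdd : Z - lam • Q = V * diagonal (fun i => μ i - lam * ind i) * Vᴴ := by
      conv_lhs => rw [hspec, hsmul]
      rw [← Matrix.sub_mul, ← Matrix.mul_sub, ← Matrix.diagonal_smul, Matrix.diagonal_sub]
      rfl
    rw [hdd]
    refine (posSemidef_diagonal_iff.mpr fun i => ?_).mul_mul_conjTranspose_same V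
    by_cases h : μ i = 0
    · simp [hind, h]
    · simp only [hind, if_neg h]
      have := hlam_le i h
      nlinarith
  by_cases hrank : Z.rank < d
  · -- rank-deficient case: exponent 1/2
    have hC0 : (0:ℝ) < 2 * Real.sqrt d * η / lam := by
      have hd0 : (0:ℝ) < Real.sqrt d := Real.sqrt_pos.mpr (by exact_mod_cast hd)
      positivity
    refine ⟨Real.sqrt (2 * Real.sqrt d * η / lam), Real.sqrt_pos.mpr hC0, ?_⟩
    intro Y hY hYn
    rw [if_pos hrank]
    have hs0 : 0 ≤ (Y * Z).trace := psd_trace_mul_nonneg hY hZ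
    have ht0 : 0 ≤ (Y * Q).trace := psd_trace_mul_nonneg hY hQpsd
    have hts : lam * (Y * Q).trace ≤ (Y * Z).trace := by
      have h0 := psd_trace_mul_nonneg hY hZlamQ
      rw [Matrix.mul_sub, Matrix.trace_sub, Matrix.mul_smul, Matrix.trace_smul,
        smul_eq_mul] at h0
      linarith
    have hYY0 : 0 ≤ (Y * Y).trace := psd_trace_mul_nonneg hY hY
    have hYYle : (Y * Y).trace ≤ η ^ 2 := by
      have h := Real.sq_sqrt hYY0
      nlinarith [Real.sqrt_nonneg ((Y * Y).trace)]
    have htau : Y.trace ≤ Real.sqrt d * η := by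
      have hsym : ∀ i j, Y j i = Y i j := by
        intro i j
        have := congrFun (congrFun hY.1 i) j
        simpa [Matrix.conjTranspose_apply] using this
      have h1 : ∑ i, (Y i i) ^ 2 ≤ (Y * Y).trace := by
        rw [Matrix.trace]
        refine Finset.sum_le_sum fun i _ => ?_
        have hmm : (Y * Y).diag i = ∑ j, (Y i j) ^ 2 := by
          simp only [Matrix.diag_apply, Matrix.mul_apply]
          exact Finset.sum_congr rfl fun j _ => by rw [hsym i j]; ring
        rw [hmm]
        exact Finset.single_le_sum (f := fun j => (Y i j) ^ 2) (fun j _ => sq_nonneg _)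
          (Finset.mem_univ i)
      have h2 : (Y.trace) ^ 2 ≤ d * ∑ i, (Y i i) ^ 2 := by
        have := sq_sum_le_card_mul_sum_sq (s := (Finset.univ : Finset (Fin d)))
          (f := fun i => Y i i)
        simpa [Matrix.trace, Matrix.diag] using this
      have h3 : (Y.trace) ^ 2 ≤ d * η ^ 2 := by nlinarith [Nat.cast_nonneg (α := ℝ) d]
      have h9 : 0 ≤ Y.trace := psd_trace_nonneg hY
      have h10 : Y.trace = Real.sqrt ((Y.trace) ^ 2) := (Real.sqrt_sq h9).symm
      rw [h10]
      calc Real.sqrt ((Y.trace) ^ 2) ≤ Real.sqrt (d * η ^ 2) := Real.sqrt_le_sqrt h3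
        _ = Real.sqrt d * η := by
            rw [Real.sqrt_mul (Nat.cast_nonneg d), Real.sqrt_sq hη.le]
    set X : Matrix (Fin d) (Fin d) ℝ := (1 - Q) * Y * (1 - Q) with hX
    have hXpsd : X.PosSemidef := by
      have h1Q : (1 - Q)ᴴ = 1 - Q := by
        rw [Matrix.conjTranspose_sub, Matrix.conjTranspose_one, hQsym]
      have := hY.mul_mul_conjTranspose_same (1 - Q)
      rwa [h1Q] at this
    have hPZ : (1 - Q) * Z = 0 := by rw [Matrix.sub_mul, Matrix.one_mul, hQZ, sub_self]
    have hXZ : (X * Z).trace = 0 := by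
      have e : X * Z = (1 - Q) * Y * ((1 - Q) * Z) := by rw [hX]; noncomm_ring
      rw [e, hPZ, Matrix.mul_zero, trace_zero]
    set E : Matrix (Fin d) (Fin d) ℝ := Y - X with hE
    have hEexp : E = Q * Y + Y * Q - Q * (Y * Q) := by rw [hE, hX]; noncomm_ring
    have hexp : E * E = Q*Y*(Q*Y) + Q*(Y*(Y*Q)) - Q*Y*(Q*(Y*Q)) + Y*((Q*Q)*Y)
        + Y*(Q*(Y*Q)) - Y*((Q*Q)*(Y*Q)) - Q*(Y*((Q*Q)*Y)) - Q*(Y*(Q*(Y*Q)))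
        + Q*(Y*((Q*Q)*(Y*Q))) := by
      rw [hEexp]; noncomm_ring
    rw [hQQ] at hexp
    have hEE : E * E = Q*(Y*(Y*Q)) + Y*(Q*Y) - Q*(Y*(Q*(Y*Q))) := by
      rw [hexp]; noncomm_ring
    have htE : (E * E).trace = 2 * ((Y*Y*Q).trace) - ((Q*Y*Q) * (Q*Y*Q)).trace := by
      rw [hEE, Matrix.trace_sub, Matrix.trace_add]
      have h1 : (Q*(Y*(Y*Q))).trace = (Y*Y*Q).trace := by
        rw [trace_mul_comm]
        congr 1
        have e : Y*(Y*Q)*Q = Y*Y*(Q*Q) := by noncomm_ring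
        rw [e, hQQ]
      have h2 : (Y*(Q*Y)).trace = (Y*Y*Q).trace := by
        rw [← Matrix.mul_assoc, trace_mul_cycle, ← Matrix.mul_assoc]
      have e3 : (Q*Y*Q) * (Q*Y*Q) = Q*(Y*((Q*Q)*(Y*Q))) := by noncomm_ring
      rw [hQQ] at e3
      have h3 : (Q*(Y*(Q*(Y*Q)))).trace = ((Q*Y*Q) * (Q*Y*Q)).trace := by rw [e3]
      rw [h1, h2, h3]; ring
    have hG : (Q*Y*Q).PosSemidef := by
      have := hY.mul_mul_conjTranspose_same Q
      rwa [hQsym] at this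
    have hGG : 0 ≤ ((Q*Y*Q) * (Q*Y*Q)).trace := psd_trace_mul_nonneg hG hG
    open MatrixOrder in set W := CFC.sqrt Y with hWdef
    have hW : W * W = Y := by open MatrixOrder in exact CFC.sqrt_mul_sqrt_self Y hY.nonneg
    have hWs : Wᴴ = W := by open MatrixOrder in exact (CFC.sqrt_nonneg Y).posSemidef.1
    have hK : (W*Q*W).PosSemidef := by
      have := hQpsd.mul_mul_conjTranspose_same W
      rwa [hWs] at this
    have h4 : (Y*Y*Q).trace = (Y*(W*Q*W)).trace := by
      conv_lhs => rw [← hW]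
      conv_rhs => rw [← hW]
      rw [show (W*W)*(W*W)*Q = W*((W*(W*W))*Q) from by noncomm_ring, trace_mul_comm,
        show ((W*(W*W))*Q)*W = (W*W)*(W*Q*W) from by noncomm_ring]
    have h5 : (Y*(W*Q*W)).trace ≤ Y.trace * (W*Q*W).trace := psd_trace_mul_le hY hK
    have h6 : (W*Q*W).trace = (Y*Q).trace := by
      rw [trace_mul_comm, show W*(W*Q) = (W*W)*Q from by noncomm_ring, hW]
    have hEEle : (E*E).trace ≤ 2 * Real.sqrt d * η / lam * (Y*Z).trace := by
      have c1 : (E*E).trace ≤ 2 * (Y.trace * (Y*Q).trace) := by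
        rw [htE]
        have := h4 ▸ h5
        rw [h6] at this
        linarith
      have hsd : 0 ≤ Real.sqrt d := Real.sqrt_nonneg _
      have c2 : (E*E).trace ≤ 2 * (Real.sqrt d * η) * ((Y*Q).trace) := by
        nlinarith [psd_trace_nonneg hY]
      calc (E*E).trace ≤ 2 * (Real.sqrt d * η) * ((Y*Q).trace) := c2
        _ ≤ 2 * (Real.sqrt d * η) * ((Y*Z).trace / lam) := by
            refine mul_le_mul_of_nonneg_left ?_ (by nlinarith)
            rw [le_div_iff₀ hlam_pos]
            linarith [hts]
        _ = 2 * Real.sqrt d * η / lam * (Y*Z).trace := by ring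
    have hbdd : BddBelow {r : ℝ | ∃ X' : Matrix (Fin d) (Fin d) ℝ,
        X'.PosSemidef ∧ (X' * Z).trace = 0 ∧ r = Real.sqrt (((Y - X') * (Y - X')).trace)} := by
      refine ⟨0, ?_⟩
      rintro r ⟨X', -, -, rfl⟩
      exact Real.sqrt_nonneg _
    have hmem : Real.sqrt ((E*E).trace) ∈ {r : ℝ | ∃ X' : Matrix (Fin d) (Fin d) ℝ,
        X'.PosSemidef ∧ (X' * Z).trace = 0 ∧ r = Real.sqrt (((Y - X') * (Y - X')).trace)} :=
      ⟨X, hXpsd, hXZ, by rw [hE]⟩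
    calc sInf {r : ℝ | ∃ X : Matrix (Fin d) (Fin d) ℝ,
          X.PosSemidef ∧ (X * Z).trace = 0 ∧ r = Real.sqrt (((Y - X) * (Y - X)).trace)}
        ≤ Real.sqrt ((E*E).trace) := csInf_le hbdd hmem
      _ ≤ Real.sqrt (2 * Real.sqrt d * η / lam * (Y*Z).trace) := Real.sqrt_le_sqrt hEEle
      _ = Real.sqrt (2 * Real.sqrt d * η / lam) * Real.sqrt ((Y*Z).trace) :=
          Real.sqrt_mul hC0.le _
      _ = Real.sqrt (2 * Real.sqrt d * η / lam) * ((Y*Z).trace) ^ ((1:ℝ)/2) := by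
          rw [Real.sqrt_eq_rpow ((Y*Z).trace)]
  · -- full-rank case: exponent 1
    have hall : ∀ i, μ i ≠ 0 := by
      intro i hi
      apply hrank
      rw [hZ.1.rank_eq_card_non_zero_eigs]
      calc Fintype.card {j // hZ.1.eigenvalues j ≠ 0} < Fintype.card (Fin d) :=
            Fintype.card_subtype_lt (x := i) (by simp [← hmu, hi])
        _ = d := Fintype.card_fin d
    have hQ1 : Q = 1 := by
      rw [hQdef, show ind = fun _ => (1:ℝ) from funext fun i => if_neg (hall i),
        diagonal_one, Matrix.mul_one, hVV]
    refine ⟨1 / lam, by positivity, ?_⟩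
    intro Y hY hYn
    rw [if_neg hrank, Real.rpow_one]
    have hs0 : 0 ≤ (Y * Z).trace := psd_trace_mul_nonneg hY hZ
    have hts : lam * Y.trace ≤ (Y * Z).trace := by
      have h0 := psd_trace_mul_nonneg hY hZlamQ
      rw [Matrix.mul_sub, Matrix.trace_sub, Matrix.mul_smul, Matrix.trace_smul,
        smul_eq_mul, hQ1, Matrix.mul_one] at h0
      linarith
    have h7 : (Y * Y).trace ≤ Y.trace ^ 2 := by
      have := psd_trace_mul_le hY hY
      nlinarith
    have h9 : 0 ≤ Y.trace := psd_trace_nonneg hY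
    have h8 : Real.sqrt ((Y * Y).trace) ≤ Y.trace := by
      calc Real.sqrt ((Y * Y).trace) ≤ Real.sqrt (Y.trace ^ 2) := Real.sqrt_le_sqrt h7
        _ = Y.trace := Real.sqrt_sq h9
    have hbdd : BddBelow {r : ℝ | ∃ X' : Matrix (Fin d) (Fin d) ℝ,
        X'.PosSemidef ∧ (X' * Z).trace = 0 ∧ r = Real.sqrt (((Y - X') * (Y - X')).trace)} := by
      refine ⟨0, ?_⟩
      rintro r ⟨X', -, -, rfl⟩
      exact Real.sqrt_nonneg _
    have hmem : Real.sqrt ((Y*Y).trace) ∈ {r : ℝ | ∃ X' : Matrix (Fin d) (Fin d) ℝ,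
        X'.PosSemidef ∧ (X' * Z).trace = 0 ∧ r = Real.sqrt (((Y - X') * (Y - X')).trace)} :=
      ⟨0, Matrix.PosSemidef.zero, by simp, by simp⟩
    calc sInf {r : ℝ | ∃ X : Matrix (Fin d) (Fin d) ℝ,
          X.PosSemidef ∧ (X * Z).trace = 0 ∧ r = Real.sqrt (((Y - X) * (Y - X)).trace)}
        ≤ Real.sqrt ((Y*Y).trace) := csInf_le hbdd hmem
      _ ≤ Y.trace := h8
      _ ≤ (Y * Z).trace / lam := by rw [le_div_iff₀ hlam_pos]; linarith
      _ = 1 / lam * (Y * Z).trace := by ring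
end

section
/- Let d ≥ 2 be an integer and let F_d := {(x, 0, Z) ∈ E : x ≤ 0 and Z is positive semidefinite}. For integers k ≥ 2 define w^k := (d·log(k)/k, 0, I_d) ∈ E. Then dist(w^k, F_d) = d·log(k)/k, 0 < dist(w^k, K_logdet) ≤ 1/k, and liminf_{k→∞} dist(w^k, F_d)/g_d(dist(w^k, K_logdet)) ≥ d. (Hence the residual function g_d in the entropic error bound for F_d cannot be replaced by any function of strictly smaller order as t → 0⁺.) -/
open Matrix Filter

noncomputable section

/-- The space `E = ℝ × ℝ × S^d` (matrix parts are required to be symmetric where relevant). -/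
abbrev E (d : ℕ) : Type := ℝ × ℝ × Matrix (Fin d) (Fin d) ℝ

/-- The inner product `⟨(x,y,Z),(x',y',Z')⟩ = x x' + y y' + tr (Z Z')` on `E`. -/
def ip {d : ℕ} (p q : E d) : ℝ := p.1 * q.1 + p.2.1 * q.2.1 + (p.2.2 * q.2.2).trace

/-- The induced norm `‖(x,y,Z)‖ = sqrt (x² + y² + tr (Z²))` on `E`. -/
def nrm {d : ℕ} (p : E d) : ℝ := Real.sqrt (p.1 ^ 2 + p.2.1 ^ 2 + (p.2.2 * p.2.2).trace)

/-- Distance from a point to a set: `dist(p, S) = inf {‖p - s‖ : s ∈ S}`. -/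
def sdist {d : ℕ} (p : E d) (S : Set (E d)) : ℝ := sInf {r : ℝ | ∃ s ∈ S, r = nrm (p - s)}

/-- The log-determinant cone `K_logdet`. -/
def Klogdet (d : ℕ) : Set (E d) :=
  {p | (0 < p.2.1 ∧ p.2.2.PosDef ∧ p.1 ≤ p.2.1 * Real.log ((p.2.1⁻¹ • p.2.2).det))
    ∨ (p.1 ≤ 0 ∧ p.2.1 = 0 ∧ p.2.2.PosSemidef)}

/-- The piecewise modified Boltzmann–Shannon entropy `g_d`. -/
def gd (t : ℝ) : ℝ :=
  if t = 0 then 0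
  else if t ≤ Real.exp (-2) then -t * Real.log t
  else t + Real.exp (-2)

/-- The face `F_d = ℝ₋ × {0} × S₊ᵈ`. -/
def Fd (d : ℕ) : Set (E d) := {p | p.1 ≤ 0 ∧ p.2.1 = 0 ∧ p.2.2.PosSemidef}

/-- The sequence `w^k = (d log k / k, 0, I_d)`. -/
def wtight (d : ℕ) (k : ℕ) : E d := (d * Real.log k / k, 0, (1 : Matrix (Fin d) (Fin d) ℝ))

/- ## Auxiliary lemmas -/

lemma negmullog_mono {t s : ℝ} (ht : 0 < t) (hts : t ≤ s) (hs : s ≤ Real.exp (-1)) :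
    -(t * Real.log t) ≤ -(s * Real.log s) := by
  have hs0 : 0 < s := lt_of_lt_of_le ht hts
  set u := t / s with hu
  have hu0 : 0 < u := div_pos ht hs0
  have hu1 : u ≤ 1 := (div_le_one hs0).2 hts
  have hlogs : Real.log s ≤ -1 := by
    calc Real.log s ≤ Real.log (Real.exp (-1)) := Real.log_le_log hs0 hs
    _ = -1 := Real.log_exp _
  have h1 : Real.log u⁻¹ ≤ u⁻¹ - 1 := Real.log_le_sub_one_of_pos (by positivity)
  rw [Real.log_inv] at h1
  have h1' : u - 1 ≤ u * Real.log u := by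
    have := mul_le_mul_of_nonneg_left h1 hu0.le
    have huu : u * u⁻¹ = 1 := mul_inv_cancel₀ hu0.ne'
    nlinarith
  have ht_eq : t = u * s := by rw [hu, div_mul_cancel₀ t hs0.ne']
  have hlt : Real.log t = Real.log u + Real.log s := by
    rw [ht_eq, Real.log_mul hu0.ne' hs0.ne']
  have h2 : (u - 1) * (-1) ≤ (u - 1) * Real.log s :=
    mul_le_mul_of_nonpos_left hlogs (by linarith)
  rw [hlt, ht_eq]
  nlinarith [mul_le_mul_of_nonneg_left h1' hs0.le, mul_le_mul_of_nonneg_left h2 hs0.le]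

lemma negmullog_le_two_sqrt {c : ℝ} (hc : 0 < c) : -(c * Real.log c) ≤ 2 * Real.sqrt c := by
  have hsq : Real.sqrt c * Real.sqrt c = c := Real.mul_self_sqrt hc.le
  have hsp : 0 < Real.sqrt c := Real.sqrt_pos.2 hc
  have h : Real.log (Real.sqrt c)⁻¹ ≤ (Real.sqrt c)⁻¹ - 1 :=
    Real.log_le_sub_one_of_pos (by positivity)
  rw [Real.log_inv, Real.log_sqrt hc.le] at h
  have h2 := mul_le_mul_of_nonneg_left h hc.le
  have : c * (Real.sqrt c)⁻¹ = Real.sqrt c := by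
    field_simp
    rw [Real.sq_sqrt hc.le]
  nlinarith

lemma trace_eq_sum_eigs {d : ℕ} {A : Matrix (Fin d) (Fin d) ℝ} (hA : A.IsHermitian) :
    A.trace = ∑ i, hA.eigenvalues i := by
  have h : (star (hA.eigenvectorUnitary : Matrix (Fin d) (Fin d) ℝ)) * A *
      (hA.eigenvectorUnitary : Matrix (Fin d) (Fin d) ℝ) = diagonal (RCLike.ofReal ∘ hA.eigenvalues) := by
    have := hA.conjStarAlgAut_star_eigenvectorUnitary
    simpa [Unitary.conjStarAlgAut_star_apply] using this
  have h2 : ((star (hA.eigenvectorUnitary : Matrix (Fin d) (Fin d) ℝ)) * A *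
      (hA.eigenvectorUnitary : Matrix (Fin d) (Fin d) ℝ)).trace
      = (diagonal (RCLike.ofReal ∘ hA.eigenvalues) : Matrix (Fin d) (Fin d) ℝ).trace := by
    rw [h]
  rw [trace_mul_cycle] at h2
  rw [Matrix.mem_unitaryGroup_iff.mp hA.eigenvectorUnitary.2, one_mul] at h2
  rw [h2, trace_diagonal]
  simp

lemma log_det_le {d : ℕ} {Z : Matrix (Fin d) (Fin d) ℝ} (hZ : Z.PosDef) :
    Real.log Z.det ≤ Z.trace - d := by
  have hH := hZ.isHermitian
  have hev : ∀ i, 0 < hH.eigenvalues i := hZ.eigenvalues_pos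
  have hdet : Z.det = ∏ i, hH.eigenvalues i := by
    rw [hH.det_eq_prod_eigenvalues]; simp
  rw [hdet, trace_eq_sum_eigs hH, Real.log_prod (fun i _ => (hev i).ne')]
  have : ∀ i ∈ Finset.univ, Real.log (hH.eigenvalues i) ≤ hH.eigenvalues i - 1 :=
    fun i _ => Real.log_le_sub_one_of_pos (hev i)
  calc ∑ i, Real.log (hH.eigenvalues i) ≤ ∑ i, (hH.eigenvalues i - 1) :=
        Finset.sum_le_sum this
    _ = (∑ i, hH.eigenvalues i) - d := by
        rw [Finset.sum_sub_distrib]; simp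

lemma trace_sq {d : ℕ} {M : Matrix (Fin d) (Fin d) ℝ} (hM : Mᵀ = M) :
    (M * M).trace = ∑ i, ∑ j, (M i j)^2 := by
  rw [Matrix.trace]
  refine Finset.sum_congr rfl fun i _ => ?_
  rw [Matrix.diag_apply, Matrix.mul_apply]
  refine Finset.sum_congr rfl fun j _ => ?_
  have : M j i = M i j := congrFun (congrFun hM.symm j) i
  rw [this, sq]

lemma lt_of_sq_lt_sq {v c : ℝ} (h : v^2 < c^2) (hc0 : 0 ≤ c) : v < c := by
  nlinarith [sq_nonneg (v - c), sq_nonneg (v + c)]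

lemma herm_trans {d : ℕ} {Z : Matrix (Fin d) (Fin d) ℝ} (h : Z.IsHermitian) : Zᵀ = Z := by
  rw [← Matrix.conjTranspose_eq_transpose_of_trivial]; exact h

/- ## Distance to the face -/

lemma sdist_F_eq (d k : ℕ) (hk : 2 ≤ k) :
    sdist (wtight d k) (Fd d) = d * Real.log k / k := by
  have hk1 : (1:ℝ) < k := by exact_mod_cast hk.trans_lt' one_lt_two
  have hlog : 0 < Real.log k := Real.log_pos hk1
  have hk0 : (0:ℝ) < k := by positivity
  set a := (d:ℝ) * Real.log k / k with ha
  have ha0 : 0 ≤ a := by positivity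
  have hmem : a ∈ {r : ℝ | ∃ s ∈ Fd d, r = nrm (wtight d k - s)} := by
    refine ⟨(0, 0, 1), ⟨le_refl 0, rfl, Matrix.PosSemidef.one⟩, ?_⟩
    have : nrm (wtight d k - ((0:ℝ), (0:ℝ), (1 : Matrix (Fin d) (Fin d) ℝ)))
        = Real.sqrt (a^2 + 0^2 + ((0 : Matrix (Fin d) (Fin d) ℝ) * 0).trace) := by
      simp [nrm, wtight, Prod.sub_def, ha]
    rw [this]
    simp [Real.sqrt_sq ha0]
  have hlb : ∀ r ∈ {r : ℝ | ∃ s ∈ Fd d, r = nrm (wtight d k - s)}, a ≤ r := by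
    rintro r ⟨⟨x, y, Z⟩, ⟨hx, hy, hZ⟩, rfl⟩
    simp only at hx hy hZ
    subst hy
    have hZsymm : ((1:Matrix (Fin d) (Fin d) ℝ) - Z)ᵀ = 1 - Z := by
      rw [Matrix.transpose_sub, Matrix.transpose_one, herm_trans hZ.1]
    have hT := trace_sq hZsymm
    have hTnn : 0 ≤ (((1:Matrix (Fin d) (Fin d) ℝ) - Z) * (1 - Z)).trace := by
      rw [hT]; positivity
    have hnrm : nrm (wtight d k - (x, (0:ℝ), Z))
        = Real.sqrt ((a - x)^2 + (0 - 0 : ℝ)^2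
            + (((1:Matrix (Fin d) (Fin d) ℝ) - Z) * (1 - Z)).trace) := rfl
    rw [hnrm]
    have h1 : (a - x)^2 ≤ (a - x)^2 + (0 - 0 : ℝ)^2
        + (((1:Matrix (Fin d) (Fin d) ℝ) - Z) * (1 - Z)).trace := by nlinarith
    calc a ≤ a - x := by linarith
      _ = Real.sqrt ((a - x)^2) := (Real.sqrt_sq (by linarith)).symm
      _ ≤ _ := Real.sqrt_le_sqrt h1
  exact le_antisymm (csInf_le ⟨a, hlb⟩ hmem) (le_csInf ⟨a, hmem⟩ hlb)

/- ## Upper bound for the distance to the cone -/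

lemma sdist_K_le (d k : ℕ) (hk : 2 ≤ k) :
    sdist (wtight d k) (Klogdet d) ≤ 1 / k := by
  have hk0 : (0:ℝ) < k := by positivity
  have hbdd : BddBelow {r : ℝ | ∃ s ∈ Klogdet d, r = nrm (wtight d k - s)} :=
    ⟨0, by rintro r ⟨s, _, rfl⟩; exact Real.sqrt_nonneg _⟩
  apply csInf_le hbdd
  refine ⟨((d:ℝ) * Real.log k / k, 1/(k:ℝ), 1), Or.inl ⟨by positivity, Matrix.PosDef.one, ?_⟩, ?_⟩
  · have hdet : (((1/(k:ℝ))⁻¹) • (1 : Matrix (Fin d) (Fin d) ℝ)).det = (k:ℝ)^d := by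
      rw [Matrix.det_smul, Matrix.det_one, one_div, inv_inv]
      simp
    show (d:ℝ) * Real.log k / k ≤ (1/(k:ℝ)) * Real.log (((1/(k:ℝ))⁻¹) • (1 : Matrix (Fin d) (Fin d) ℝ)).det
    rw [hdet, Real.log_pow]
    apply le_of_eq
    ring
  · have h : nrm (wtight d k - ((d:ℝ) * Real.log k / k, 1/(k:ℝ), 1))
        = Real.sqrt ((0:ℝ)^2 + (0 - 1/(k:ℝ))^2 + ((0:Matrix (Fin d) (Fin d) ℝ) * 0).trace) := by
      simp [nrm, wtight, Prod.sub_def]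
    rw [h, mul_zero, Matrix.trace_zero]
    rw [show (0:ℝ)^2 + (0 - 1/(k:ℝ))^2 + 0 = (1/(k:ℝ))^2 by ring, Real.sqrt_sq (by positivity)]

/- ## Lower bound machine for the distance to the cone -/

lemma lowerA (d k : ℕ) (hk : 2 ≤ k) {c : ℝ} (hc0 : 0 < c)
    (hce : c ≤ Real.exp (-1))
    (hc2 : c + d*c^2 + d * (c * Real.log c⁻¹) < d * Real.log k / k) :
    ∀ r ∈ {r : ℝ | ∃ s ∈ Klogdet d, r = nrm (wtight d k - s)}, c ≤ r := by
  have he1 : Real.exp (-1) ≤ 1 := by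
    rw [show (1:ℝ) = Real.exp 0 by rw [Real.exp_zero]]
    exact Real.exp_le_exp.2 (by norm_num)
  have hc1 : c ≤ 1 := hce.trans he1
  set a := (d:ℝ) * Real.log k / k with ha
  rintro r ⟨⟨x, y, Z⟩, hs, rfl⟩
  by_contra hcon
  push_neg at hcon
  have hZsymm : Zᵀ = Z := by
    rcases hs with ⟨_, hZ, _⟩ | ⟨_, _, hZ⟩
    exacts [herm_trans hZ.isHermitian, herm_trans hZ.1]
  have hMsymm : ((1:Matrix (Fin d) (Fin d) ℝ) - Z)ᵀ = 1 - Z := by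
    rw [Matrix.transpose_sub, Matrix.transpose_one, hZsymm]
  have hT := trace_sq hMsymm
  set T := (((1:Matrix (Fin d) (Fin d) ℝ) - Z) * (1 - Z)).trace with hTdef
  have hTnn : 0 ≤ T := by rw [hT]; positivity
  have hnrm : nrm (wtight d k - (x, y, Z)) = Real.sqrt ((a - x)^2 + (0 - y)^2 + T) := rfl
  rw [hnrm] at hcon
  have hS : (a - x)^2 + (0 - y)^2 + T < c^2 := (Real.sqrt_lt' hc0).1 hcon
  clear_value T
  have hax : (a - x)^2 < c^2 := by linarith only [hS, hTnn, sq_nonneg (0 - y)]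
  have hx : a - c < x := by
    have := lt_of_sq_lt_sq hax hc0.le
    linarith only [this]
  rcases hs with ⟨hy, hZpd, hxle⟩ | ⟨hxle, hy0, _⟩
  · simp only at hy hxle
    have hy2 : y^2 < c^2 := by linarith only [hS, hTnn, sq_nonneg (a - x)]
    have hyc : y < c := lt_of_sq_lt_sq hy2 hc0.le
    have hdetpos : 0 < Z.det := hZpd.det_pos
    have hylog : Real.log ((y⁻¹ • Z).det) = d * Real.log y⁻¹ + Real.log Z.det := by
      rw [Matrix.det_smul, Real.log_mul (by positivity) hdetpos.ne', Real.log_pow]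
      simp
    have hTlt : T < c^2 := by linarith only [hS, sq_nonneg (a - x), sq_nonneg (0 - y)]
    have hdiagbd : ∀ i : Fin d, Z i i - 1 ≤ c := by
      intro i
      have h2 : (((1:Matrix (Fin d) (Fin d) ℝ) - Z) i i)^2 ≤ T := by
        rw [hT]
        calc (((1:Matrix (Fin d) (Fin d) ℝ) - Z) i i)^2
            ≤ ∑ j, (((1:Matrix (Fin d) (Fin d) ℝ) - Z) i j)^2 :=
              Finset.single_le_sum (f := fun j => (((1:Matrix (Fin d) (Fin d) ℝ) - Z) i j)^2)
                (fun j _ => sq_nonneg _) (Finset.mem_univ i)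
          _ ≤ ∑ i', ∑ j, (((1:Matrix (Fin d) (Fin d) ℝ) - Z) i' j)^2 :=
              Finset.single_le_sum
                (f := fun i' => ∑ j, (((1:Matrix (Fin d) (Fin d) ℝ) - Z) i' j)^2)
                (fun i' _ => Finset.sum_nonneg fun j _ => sq_nonneg _) (Finset.mem_univ i)
      have h3 : ((1:Matrix (Fin d) (Fin d) ℝ) - Z) i i = 1 - Z i i := by
        simp [Matrix.sub_apply]
      rw [h3] at h2
      have h4 : (Z i i - 1)^2 < c^2 := by
        rw [show (Z i i - 1)^2 = (1 - Z i i)^2 by ring]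
        exact lt_of_le_of_lt h2 hTlt
      exact (lt_of_sq_lt_sq h4 hc0.le).le
    have htr : Z.trace - d ≤ d * c := by
      have hsum : ∑ i : Fin d, (Z i i - 1) ≤ ∑ _i : Fin d, c :=
        Finset.sum_le_sum (fun i _ => hdiagbd i)
      simp only [Finset.sum_sub_distrib, Finset.sum_const, Finset.card_univ,
        Fintype.card_fin, nsmul_eq_mul] at hsum
      have htrace : Z.trace = ∑ i, Z i i := by simp [Matrix.trace, Matrix.diag]
      rw [htrace]
      linarith only [hsum]
    have hld : Real.log Z.det ≤ d * c := (log_det_le hZpd).trans (by linarith)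
    have h5 : y * Real.log Z.det ≤ d * c^2 := by
      have h5a : y * Real.log Z.det ≤ y * (d * c) := mul_le_mul_of_nonneg_left hld hy.le
      have h5b : y * (d * c) ≤ c * (d * c) :=
        mul_le_mul_of_nonneg_right hyc.le (by positivity)
      calc y * Real.log Z.det ≤ c * (d * c) := h5a.trans h5b
        _ = d * c^2 := by ring
    have h6 : y * Real.log y⁻¹ ≤ c * Real.log c⁻¹ := by
      have h := negmullog_mono hy hyc.le hce
      rw [Real.log_inv, Real.log_inv, mul_neg, mul_neg]
      exact h
    rw [hylog] at hxle
    have hxle' : x ≤ d * (c * Real.log c⁻¹) + d * c^2 := by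
      have h7 : d * (y * Real.log y⁻¹) ≤ d * (c * Real.log c⁻¹) :=
        mul_le_mul_of_nonneg_left h6 (by positivity)
      have hexp : y * ((d:ℝ) * Real.log y⁻¹ + Real.log Z.det)
          = (d:ℝ) * (y * Real.log y⁻¹) + y * Real.log Z.det := by ring
      linarith only [hxle, hexp, h7, h5]
    linarith only [hx, hxle', hc2]
  · simp only at hxle hy0
    have hlogc : 0 ≤ Real.log c⁻¹ := by
      rw [Real.log_inv]
      linarith [Real.log_nonpos hc0.le hc1]
    have hpos1 : 0 ≤ (d:ℝ) * c^2 := by positivity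
    have hpos2 : 0 ≤ (d:ℝ) * (c * Real.log c⁻¹) := by positivity
    linarith only [hx, hxle, hc2, hpos1, hpos2]

lemma sdist_K_lb (d k : ℕ) (hk : 2 ≤ k) {c : ℝ} (hc0 : 0 < c)
    (hce : c ≤ Real.exp (-1))
    (hc2 : c + d*c^2 + d * (c * Real.log c⁻¹) < d * Real.log k / k) :
    c ≤ sdist (wtight d k) (Klogdet d) := by
  have hne : {r : ℝ | ∃ s ∈ Klogdet d, r = nrm (wtight d k - s)}.Nonempty :=
    ⟨nrm (wtight d k - ((0:ℝ), (0:ℝ), (0 : Matrix (Fin d) (Fin d) ℝ))),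
      ⟨((0:ℝ), (0:ℝ), (0 : Matrix (Fin d) (Fin d) ℝ)),
        Or.inr ⟨le_refl 0, rfl, Matrix.PosSemidef.zero⟩, rfl⟩⟩
  exact le_csInf hne (lowerA d k hk hc0 hce hc2)

lemma sdist_K_pos (d k : ℕ) (hd : 2 ≤ d) (hk : 2 ≤ k) : 0 < sdist (wtight d k) (Klogdet d) := by
  have hd0 : (0:ℝ) < d := by
    have : (2:ℝ) ≤ d := by exact_mod_cast hd
    linarith
  have he1 : Real.exp (-1) ≤ 1 := by
    rw [show (1:ℝ) = Real.exp 0 by rw [Real.exp_zero]]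
    exact Real.exp_le_exp.2 (by norm_num)
  have hk1 : (1:ℝ) < k := by exact_mod_cast hk.trans_lt' one_lt_two
  have hlog : 0 < Real.log k := Real.log_pos hk1
  have hk0 : (0:ℝ) < k := by positivity
  set a := (d:ℝ) * Real.log k / k with ha
  have ha0 : 0 < a := by positivity
  set c := min (Real.exp (-1)) ((a / (6*((d:ℝ)+1)))^2) with hc
  have hc0 : 0 < c := lt_min (Real.exp_pos _) (by positivity)
  have hce : c ≤ Real.exp (-1) := min_le_left _ _
  have hc1 : c ≤ 1 := hce.trans he1
  have hsr : Real.sqrt c ≤ a / (6*((d:ℝ)+1)) := by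
    calc Real.sqrt c ≤ Real.sqrt ((a/(6*((d:ℝ)+1)))^2) := Real.sqrt_le_sqrt (min_le_right _ _)
    _ = a/(6*((d:ℝ)+1)) := Real.sqrt_sq (by positivity)
  have hss := Real.mul_self_sqrt hc0.le
  have hs1 : Real.sqrt c ≤ 1 := Real.sqrt_le_one.2 hc1
  have hsn : 0 ≤ Real.sqrt c := Real.sqrt_nonneg c
  have hcs : c ≤ Real.sqrt c := by nlinarith
  have hc2s : c^2 ≤ Real.sqrt c := by nlinarith
  have h2s : c * Real.log c⁻¹ ≤ 2 * Real.sqrt c := by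
    rw [Real.log_inv, mul_neg]
    exact negmullog_le_two_sqrt hc0
  have hdn : (0:ℝ) ≤ d := by positivity
  have hkey : c + d*c^2 + d * (c * Real.log c⁻¹) ≤ (3*(d:ℝ)+1) * Real.sqrt c := by
    nlinarith [mul_le_mul_of_nonneg_left hc2s hdn, mul_le_mul_of_nonneg_left h2s hdn]
  have hval : (3*(d:ℝ)+3) * (a/(6*((d:ℝ)+1))) = a/2 := by
    field_simp
    ring
  have hc2 : c + d*c^2 + d * (c * Real.log c⁻¹) < a := by
    have h9 : (3*(d:ℝ)+1) * Real.sqrt c ≤ (3*(d:ℝ)+3) * (a/(6*((d:ℝ)+1))) := by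
      nlinarith [mul_le_mul_of_nonneg_left hsr (show (0:ℝ) ≤ 3*(d:ℝ)+1 by positivity)]
    linarith
  exact lt_of_lt_of_le hc0 (sdist_K_lb d k hk hc0 hce hc2)

set_option maxHeartbeats 1000000 in
/-- Remark 3.1 (tightness of the entropic error bound for `F_d`): along
`w^k = (d log k / k, 0, I_d)` one has `dist(w^k, F_d) = d log k / k`,
`0 < dist(w^k, K_logdet) ≤ 1/k`, and
`liminf_k dist(w^k, F_d) / g_d(dist(w^k, K_logdet)) ≥ d`. -/
theorem stmt_10 (d : ℕ) (hd : 2 ≤ d) :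
    (∀ k : ℕ, 2 ≤ k →
      sdist (wtight d k) (Fd d) = d * Real.log k / k ∧
      0 < sdist (wtight d k) (Klogdet d) ∧
      sdist (wtight d k) (Klogdet d) ≤ 1 / k) ∧
    (d : ℝ) ≤ liminf
      (fun k : ℕ => sdist (wtight d k) (Fd d) / gd (sdist (wtight d k) (Klogdet d))) atTop := by
  have hd0 : (0:ℝ) < d := by positivity
  have hdR : (2:ℝ) ≤ d := by exact_mod_cast hd
  constructor
  · intro k hk
    exact ⟨sdist_F_eq d k hk, sdist_K_pos d k hd hk, sdist_K_le d k hk⟩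
  · have hexp2 : (1:ℝ)/8 ≤ Real.exp (-2) := by
      have h8 : Real.exp 2 < 8 := by
        rw [show (2:ℝ) = 1 + 1 by norm_num, Real.exp_add]
        nlinarith [Real.exp_one_lt_d9, Real.exp_pos 1]
      rw [Real.exp_neg, one_div]
      exact inv_anti₀ (Real.exp_pos 2) h8.le
    have hexp1 : (1:ℝ)/8 ≤ Real.exp (-1) := by
      have h8 : Real.exp 1 < 8 := by nlinarith [Real.exp_one_lt_d9]
      rw [Real.exp_neg, one_div]
      exact inv_anti₀ (Real.exp_pos 1) h8.le
    have hev : ∀ᶠ k : ℕ in atTop,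
        (d:ℝ) ≤ sdist (wtight d k) (Fd d) / gd (sdist (wtight d k) (Klogdet d)) ∧
        sdist (wtight d k) (Fd d) / gd (sdist (wtight d k) (Klogdet d)) ≤ 2*d := by
      filter_upwards [eventually_ge_atTop 8] with k hk8
      have hk2 : (2:ℕ) ≤ k := le_trans (by norm_num) hk8
      have hKR : (8:ℝ) ≤ k := by exact_mod_cast hk8
      have hk1 : (1:ℝ) < k := by linarith
      have hk0 : (0:ℝ) < k := by positivity
      have hlogk : 0 < Real.log k := Real.log_pos hk1
      have hlog8 : 3 * Real.log 2 ≤ Real.log k := by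
        rw [show 3 * Real.log 2 = Real.log (2^(3:ℕ)) by rw [Real.log_pow]; push_cast; ring]
        exact Real.log_le_log (by norm_num) (by norm_num; linarith)
      have hl2 := Real.log_two_gt_d9
      have hl2' := Real.log_two_lt_d9
      set a := (d:ℝ) * Real.log k / k with ha
      have ha0 : 0 < a := by positivity
      have hc0 : (0:ℝ) < 1/(2*(k:ℝ)) := by positivity
      have h2k8 : (1:ℝ)/(2*(k:ℝ)) ≤ 1/8 :=
        one_div_le_one_div_of_le (by norm_num) (by linarith)
      have hce : (1:ℝ)/(2*(k:ℝ)) ≤ Real.exp (-1) := le_trans h2k8 hexp1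
      have hloginv : Real.log ((1/(2*(k:ℝ)))⁻¹) = Real.log 2 + Real.log k := by
        rw [one_div, inv_inv, Real.log_mul (by norm_num) hk0.ne']
      have hdiv16 : (d:ℝ)/(2*(k:ℝ)) ≤ (d:ℝ)/16 := by
        apply div_le_div_of_nonneg_left (by positivity) (by norm_num)
        linarith
      have hkey : 1 + (d:ℝ)/(2*(k:ℝ)) + (d:ℝ) * (Real.log 2 + Real.log k)
          < 2 * ((d:ℝ) * Real.log k) := by
        have hA : (d:ℝ) * Real.log 2 ≤ (d:ℝ) * 0.6931471808 :=
          mul_le_mul_of_nonneg_left hl2'.le (by positivity)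
        have hB : (d:ℝ) * (3 * Real.log 2) ≤ (d:ℝ) * Real.log k :=
          mul_le_mul_of_nonneg_left hlog8 (by positivity)
        have hC : (d:ℝ) * (3 * 0.6931471803) ≤ (d:ℝ) * (3 * Real.log 2) :=
          mul_le_mul_of_nonneg_left (by linarith) (by positivity)
        linarith only [hA, hB, hC, hdiv16, hdR]
      have hc2 : 1/(2*(k:ℝ)) + d*(1/(2*(k:ℝ)))^2
          + d * ((1/(2*(k:ℝ))) * Real.log ((1/(2*(k:ℝ)))⁻¹)) < a := by
        rw [hloginv]
        have heq : 1/(2*(k:ℝ)) + (d:ℝ)*(1/(2*(k:ℝ)))^2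
            + (d:ℝ) * ((1/(2*(k:ℝ))) * (Real.log 2 + Real.log k))
            = (1 + (d:ℝ)/(2*(k:ℝ)) + (d:ℝ) * (Real.log 2 + Real.log k)) / (2*(k:ℝ)) := by
          field_simp
        have heq2 : a = (2 * ((d:ℝ) * Real.log k)) / (2*(k:ℝ)) := by
          rw [ha]; field_simp
        rw [heq, heq2]
        exact (div_lt_div_iff_of_pos_right (by positivity)).2 hkey
      set t := sdist (wtight d k) (Klogdet d) with htdef
      have htub : t ≤ 1/(k:ℝ) := sdist_K_le d k hk2
      have htlb : 1/(2*(k:ℝ)) ≤ t := sdist_K_lb d k hk2 hc0 hce hc2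
      clear_value t
      have ht0 : 0 < t := lt_of_lt_of_le hc0 htlb
      have h1k8 : (1:ℝ)/(k:ℝ) ≤ 1/8 := one_div_le_one_div_of_le (by norm_num) hKR
      have hte2 : t ≤ Real.exp (-2) := le_trans htub (le_trans h1k8 hexp2)
      have hte1' : (1:ℝ)/(k:ℝ) ≤ Real.exp (-1) := le_trans h1k8 hexp1
      have hte1 : t ≤ Real.exp (-1) := le_trans htub hte1'
      have hgd : gd t = -(t * Real.log t) := by
        rw [gd, if_neg ht0.ne', if_pos hte2]; ring
      have hgdub : gd t ≤ Real.log k / k := by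
        rw [hgd]
        have h := negmullog_mono ht0 htub hte1'
        have heq3 : -((1:ℝ)/(k:ℝ) * Real.log ((1:ℝ)/(k:ℝ))) = Real.log k / k := by
          rw [one_div, Real.log_inv]; ring
        linarith only [h, heq3.le, heq3.ge]
      have hgdlb : Real.log k / (2*(k:ℝ)) ≤ gd t := by
        rw [hgd]
        have h := negmullog_mono hc0 htlb hte1
        have heq3 : -((1:ℝ)/(2*(k:ℝ)) * Real.log ((1:ℝ)/(2*(k:ℝ))))
            = (Real.log 2 + Real.log k)/(2*(k:ℝ)) := by
          rw [one_div, Real.log_inv, Real.log_mul (by norm_num) hk0.ne']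
          ring
        have h4 : Real.log k / (2*(k:ℝ)) ≤ (Real.log 2 + Real.log k)/(2*(k:ℝ)) := by
          apply div_le_div_of_nonneg_right _ (by positivity)
          linarith
        linarith only [h, heq3.le, heq3.ge, h4]
      have hgdpos : 0 < gd t := lt_of_lt_of_le (by positivity) hgdlb
      have hF : sdist (wtight d k) (Fd d) = a := sdist_F_eq d k hk2
      rw [hF]
      constructor
      · rw [le_div_iff₀ hgdpos]
        calc (d:ℝ) * gd t ≤ (d:ℝ) * (Real.log k / k) :=
              mul_le_mul_of_nonneg_left hgdub (by positivity)
          _ = a := by rw [ha]; ring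
      · rw [div_le_iff₀ hgdpos]
        calc a = 2*(d:ℝ) * (Real.log k / (2*(k:ℝ))) := by
              rw [ha]; field_simp
          _ ≤ 2*(d:ℝ) * gd t := mul_le_mul_of_nonneg_left hgdlb (by positivity)
    have hbd : IsBoundedUnder (· ≤ ·) atTop
        (fun k : ℕ => sdist (wtight d k) (Fd d) / gd (sdist (wtight d k) (Klogdet d))) :=
      isBoundedUnder_of_eventually_le (hev.mono fun k h => h.2)
    exact le_liminf_of_le hbd.isCoboundedUnder_ge (hev.mono fun k h => h.1)
end
end

section
/- Let d ≥ 2 be an integer, let n_y > 0 be real, and let n_Z be a d×d real symmetric positive semidefinite matrix with 0 < rank(n_Z) < d; set n := (0, n_y, n_Z) ∈ E and F_s := {(x, 0, Z) ∈ E : x ≤ 0, Z positive semidefinite, tr(Z·n_Z) = 0} (which equals K_logdet ∩ {n}^⊥). Then for every η > 0 there exists κ > 0 such that for every q ∈ E with ⟨q, n⟩ = 0 and ‖q‖ ≤ η one has dist(q, F_s) ≤ κ · dist(q, K_logdet)^{1/2}. -/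
open Matrix Filter

noncomputable section

variable {d : ℕ}


lemma tr_mul_sum (A B : Matrix (Fin d) (Fin d) ℝ) :
    (A * B).trace = ∑ i, ∑ j, A i j * B j i := by
  simp [Matrix.trace, Matrix.mul_apply, Matrix.diag]

lemma symm_of_herm {A : Matrix (Fin d) (Fin d) ℝ} (h : A.IsHermitian) : Aᵀ = A := by
  have := h.eq; rwa [conjTranspose_eq_transpose_of_trivial] at this

lemma tr_sq_eq {A : Matrix (Fin d) (Fin d) ℝ} (h : Aᵀ = A) :
    (A * A).trace = ∑ i, ∑ j, (A i j) ^ 2 := by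
  rw [tr_mul_sum]
  refine Finset.sum_congr rfl fun i _ => Finset.sum_congr rfl fun j _ => ?_
  rw [sq, show A j i = A i j from congrFun (congrFun h i) j]

lemma tr_sq_nonneg {A : Matrix (Fin d) (Fin d) ℝ} (h : Aᵀ = A) : 0 ≤ (A * A).trace := by
  rw [tr_sq_eq h]; positivity

lemma psd_trace_nonneg_s12 {A : Matrix (Fin d) (Fin d) ℝ} (hA : A.PosSemidef) : 0 ≤ A.trace :=
  Finset.sum_nonneg fun i _ => by simpa using hA.dotProduct_mulVec_nonneg (Pi.single i 1)

lemma trace_mul_psd_nonneg {A B : Matrix (Fin d) (Fin d) ℝ}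
    (hA : A.PosSemidef) (hB : B.PosSemidef) : 0 ≤ (A * B).trace := by
  obtain ⟨C, rfl⟩ : ∃ C : Matrix (Fin d) (Fin d) ℝ, A = Cᴴ * C := by
    open scoped MatrixOrder in
    exact CStarAlgebra.nonneg_iff_eq_star_mul_self.mp hA.nonneg
  rw [Matrix.mul_assoc, Matrix.trace_mul_comm]
  exact psd_trace_nonneg_s12 (by simpa [Matrix.mul_assoc] using hB.mul_mul_conjTranspose_same C)


lemma star_pi_real (x : Fin d → ℝ) : star x = x := rfl

lemma psd_smul {A : Matrix (Fin d) (Fin d) ℝ} (hA : A.PosSemidef) {c : ℝ} (hc : 0 ≤ c) :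
    (c • A).PosSemidef := by
  refine .of_dotProduct_mulVec_nonneg ?_ ?_
  · simpa [Matrix.IsHermitian, conjTranspose_smul] using congrArg (c • ·) hA.1
  · intro x
    rw [smul_mulVec, dotProduct_smul]
    exact mul_nonneg hc (hA.dotProduct_mulVec_nonneg x)

lemma smul_one_sub_psd {Z : Matrix (Fin d) (Fin d) ℝ} (hZ : Z.PosSemidef) :
    (Z.trace • (1 : Matrix (Fin d) (Fin d) ℝ) - Z).PosSemidef := by
  obtain ⟨B, rfl⟩ : ∃ B : Matrix (Fin d) (Fin d) ℝ, Z = Bᴴ * B := by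
    open scoped MatrixOrder in
    exact CStarAlgebra.nonneg_iff_eq_star_mul_self.mp hZ.nonneg
  have hherm : ((Bᴴ * B).trace • (1 : Matrix (Fin d) (Fin d) ℝ) - Bᴴ * B).IsHermitian := by
    apply Matrix.IsHermitian.sub
    · simpa [Matrix.IsHermitian, conjTranspose_smul] using
        congrArg ((Bᴴ * B).trace • ·) (isHermitian_one (n := Fin d) (α := ℝ))
    · exact isHermitian_conjTranspose_mul_self B
  refine .of_dotProduct_mulVec_nonneg hherm fun x => ?_
  have key : (B *ᵥ x) ⬝ᵥ (B *ᵥ x) ≤ (Bᴴ * B).trace * (x ⬝ᵥ x) := by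
    have htr : (Bᴴ * B).trace = ∑ j, ∑ i, (B i j) ^ 2 := by
      rw [tr_mul_sum]
      refine Finset.sum_congr rfl fun j _ => Finset.sum_congr rfl fun i _ => ?_
      simp [conjTranspose_apply, sq]
    have hdot : (B *ᵥ x) ⬝ᵥ (B *ᵥ x) = ∑ i, (∑ j, B i j * x j) ^ 2 := by
      simp [dotProduct, mulVec, sq]
    rw [hdot, htr]
    calc ∑ i, (∑ j, B i j * x j) ^ 2
        ≤ ∑ i, (∑ j, (B i j) ^ 2) * (∑ j, (x j) ^ 2) :=
          Finset.sum_le_sum fun i _ => Finset.sum_mul_sq_le_sq_mul_sq _ _ _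
      _ = (∑ i, ∑ j, (B i j) ^ 2) * (∑ j, (x j) ^ 2) := by rw [Finset.sum_mul]
      _ = (∑ j, ∑ i, (B i j) ^ 2) * (∑ j, (x j) ^ 2) := by rw [Finset.sum_comm]
      _ = (∑ j, ∑ i, (B i j) ^ 2) * (x ⬝ᵥ x) := by simp [dotProduct, sq]
  have hexp : star x ⬝ᵥ (((Bᴴ * B).trace • (1 : Matrix (Fin d) (Fin d) ℝ) - Bᴴ * B) *ᵥ x)
      = (Bᴴ * B).trace * (x ⬝ᵥ x) - (B *ᵥ x) ⬝ᵥ (B *ᵥ x) := by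
    rw [star_pi_real, sub_mulVec, dotProduct_sub, smul_mulVec, one_mulVec, dotProduct_smul,
      ← mulVec_mulVec, dotProduct_mulVec, vecMul_conjTranspose, star_pi_real, star_pi_real]
    rfl
  rw [hexp]
  linarith [key]

lemma smul_sub_sq_psd {Z : Matrix (Fin d) (Fin d) ℝ} (hZ : Z.PosSemidef) :
    (Z.trace • Z - Z * Z).PosSemidef := by
  obtain ⟨S, hSh, hSS⟩ : ∃ S : Matrix (Fin d) (Fin d) ℝ, Sᴴ = S ∧ S * S = Z := by
    open scoped MatrixOrder in
    exact ⟨CFC.sqrt Z, (CFC.sqrt_nonneg Z).posSemidef.1, CFC.sqrt_mul_sqrt_self Z hZ.nonneg⟩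
  have h1 := (smul_one_sub_psd hZ).mul_mul_conjTranspose_same S
  have hsq : S ᴴ = S := hSh
  rw [hsq] at h1
  have heq : S * (Z.trace • (1 : Matrix (Fin d) (Fin d) ℝ) - Z) * S
      = Z.trace • Z - Z * Z := by
    rw [Matrix.mul_sub, Matrix.sub_mul, mul_smul_comm, Matrix.mul_one, smul_mul_assoc,
      hSS]
    congr 1
    have hss : S * S = Z := hSS
    generalize S = s at hss ⊢
    rw [← hss]
    simp only [Matrix.mul_assoc]
  rwa [heq] at h1

lemma trace_eq_sum_eig {A : Matrix (Fin d) (Fin d) ℝ} (hA : A.IsHermitian) :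
    A.trace = ∑ i, hA.eigenvalues i := by
  conv_lhs => rw [hA.spectral_theorem, Unitary.conjStarAlgAut_apply]
  rw [Matrix.trace_mul_cycle]
  rw [Unitary.coe_star_mul_self]
  rw [Matrix.one_mul, Matrix.trace_diagonal]
  rfl

lemma det_le_trace_pow {Z : Matrix (Fin d) (Fin d) ℝ} (hZ : Z.PosSemidef) :
    Z.det ≤ Z.trace ^ d := by
  have h := hZ.1
  have hdet : Z.det = ∏ i, h.eigenvalues i := h.det_eq_prod_eigenvalues
  have hle : ∀ i, h.eigenvalues i ≤ Z.trace := by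
    intro i
    rw [trace_eq_sum_eig h]
    exact Finset.single_le_sum (fun j _ => hZ.eigenvalues_nonneg j) (Finset.mem_univ i)
  calc Z.det = ∏ i, h.eigenvalues i := hdet
    _ ≤ ∏ _i : Fin d, Z.trace :=
        Finset.prod_le_prod (fun i _ => hZ.eigenvalues_nonneg i) (fun i _ => hle i)
    _ = Z.trace ^ d := by simp

lemma matrix_key_setup (nZ : Matrix (Fin d) (Fin d) ℝ) (hnZ : nZ.PosSemidef)
    (hrank : 0 < nZ.rank) :
    ∃ lam : ℝ, 0 < lam ∧ ∃ Q P : Matrix (Fin d) (Fin d) ℝ,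
      Q.PosSemidef ∧ P.PosSemidef ∧ P = 1 - Q ∧ P * P = P ∧ P * nZ = 0 ∧
      (nZ - lam • Q).PosSemidef := by
  classical
  have h := hnZ.1
  set U : Matrix (Fin d) (Fin d) ℝ := (h.eigenvectorUnitary : Matrix (Fin d) (Fin d) ℝ) with hUdef
  set ev : Fin d → ℝ := h.eigenvalues with hevdef
  have hU1 : star U * U = 1 := Matrix.UnitaryGroup.star_mul_self _
  have hU2 : U * star U = 1 := mul_eq_one_comm.mp hU1
  have hcancel : ∀ X : Matrix (Fin d) (Fin d) ℝ, star U * (U * X) = X := fun X => by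
    rw [← Matrix.mul_assoc, hU1, Matrix.one_mul]
  set D : (Fin d → ℝ) → Matrix (Fin d) (Fin d) ℝ :=
    fun f => U * (diagonal f * star U) with hDdef
  have hnZD : nZ = D ev := by
    show nZ = U * (diagonal ev * star U)
    rw [← Matrix.mul_assoc]
    exact h.spectral_theorem
  have hmulD : ∀ f g, D f * D g = D (fun i => f i * g i) := by
    intro f g
    show U * (diagonal f * star U) * (U * (diagonal g * star U))
      = U * (diagonal (fun i => f i * g i) * star U)
    simp only [Matrix.mul_assoc]
    rw [hcancel (diagonal g * star U), ← Matrix.mul_assoc (diagonal f), diagonal_mul_diagonal]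
  have hDpsd : ∀ f, (∀ i, 0 ≤ f i) → (D f).PosSemidef := by
    intro f hf
    have := (Matrix.PosSemidef.diagonal hf).mul_mul_conjTranspose_same U
    rwa [← Matrix.star_eq_conjTranspose, Matrix.mul_assoc] at this
  have hDsub : ∀ f g, D f - D g = D (fun i => f i - g i) := by
    intro f g
    show U * (diagonal f * star U) - U * (diagonal g * star U)
      = U * (diagonal (fun i => f i - g i) * star U)
    rw [← Matrix.mul_sub, ← Matrix.sub_mul]
    congr 2
    ext i j
    by_cases hij : i = j <;> simp [Matrix.diagonal_apply, hij]
  have hDsmul : ∀ (c : ℝ) f, c • D f = D (fun i => c * f i) := by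
    intro c f
    show c • (U * (diagonal f * star U)) = U * (diagonal (fun i => c * f i) * star U)
    have hd : diagonal (fun i => c * f i) = c • (diagonal f : Matrix (Fin d) (Fin d) ℝ) := by
      ext i j
      by_cases hij : i = j <;> simp [Matrix.diagonal_apply, hij]
    rw [hd, smul_mul_assoc, mul_smul_comm]
  have hD1 : D (fun _ => 1) = 1 := by
    show U * (diagonal (fun _ => 1) * star U) = 1
    have : diagonal (fun _ : Fin d => (1:ℝ)) = 1 := diagonal_one
    rw [this, Matrix.one_mul, hU2]
  have hD0 : D (fun _ => 0) = 0 := by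
    show U * (diagonal (fun _ => 0) * star U) = 0
    have : diagonal (fun _ : Fin d => (0:ℝ)) = 0 := diagonal_zero
    rw [this, Matrix.zero_mul, Matrix.mul_zero]
  have hnonempty : ∃ i, ev i ≠ 0 := by
    rw [h.rank_eq_card_non_zero_eigs] at hrank
    obtain ⟨x⟩ := Fintype.card_pos_iff.mp hrank
    exact ⟨x.1, x.2⟩
  obtain ⟨i0, hi0⟩ := hnonempty
  obtain ⟨b, hbS, hble⟩ := Finset.exists_min_image
    (Finset.univ.filter fun i => ev i ≠ 0) ev ⟨i0, by simp [hi0]⟩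
  have hbne : ev b ≠ 0 := (Finset.mem_filter.mp hbS).2
  have hlam : 0 < ev b := lt_of_le_of_ne (hnZ.eigenvalues_nonneg b) (Ne.symm hbne)
  have hlamle : ∀ i, ev i ≠ 0 → ev b ≤ ev i := fun i hi =>
    hble i (Finset.mem_filter.mpr ⟨Finset.mem_univ i, hi⟩)
  let ind : Fin d → ℝ := fun i => if ev i = 0 then 0 else 1
  have hinddef : ind = fun i => if ev i = 0 then 0 else 1 := rfl
  refine ⟨ev b, hlam, D ind, 1 - D ind, ?_, ?_, rfl, ?_, ?_, ?_⟩
  · exact hDpsd ind fun i => by simp only [hinddef]; split <;> norm_num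
  · have hPD : (1 : Matrix (Fin d) (Fin d) ℝ) - D ind = D (fun i => 1 - ind i) := by
      rw [← hD1, hDsub]
    rw [hPD]
    exact hDpsd _ fun i => by simp only [hinddef]; split <;> norm_num
  · rw [← hD1, hDsub, hmulD]
    have hfun : (fun i => (1 - ind i) * (1 - ind i)) = (fun i => 1 - ind i) := by
      funext i
      simp only [hinddef]
      split <;> norm_num
    rw [hfun]
  · rw [← hD1, hDsub, hnZD, hmulD]
    have hfun : (fun i => (1 - ind i) * ev i) = (fun _ : Fin d => (0:ℝ)) := by
      funext i
      simp only [hinddef]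
      by_cases hc : ev i = 0 <;> simp [hc]
    rw [hfun, hD0]
  · rw [hnZD, hDsmul, hDsub]
    refine hDpsd _ fun i => ?_
    simp only [hinddef]
    by_cases hc : ev i = 0
    · simp [hc]
    · rw [if_neg hc]
      have := hlamle i hc
      linarith

lemma matrix_key (nZ : Matrix (Fin d) (Fin d) ℝ) (hnZ : nZ.PosSemidef)
    (hrank : 0 < nZ.rank) :
    ∃ lam : ℝ, 0 < lam ∧ ∃ P : Matrix (Fin d) (Fin d) ℝ,
      P.PosSemidef ∧ P * nZ = 0 ∧
      ∀ Z : Matrix (Fin d) (Fin d) ℝ, Z.PosSemidef →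
        lam * ((Z - P * Z * P) * (Z - P * Z * P)).trace ≤ 2 * Z.trace * (Z * nZ).trace := by
  obtain ⟨lam, hlam, Q, P, hQpsd, hPpsd, hPQ, hPP, hPnZ, hlamQ⟩ := matrix_key_setup nZ hnZ hrank
  refine ⟨lam, hlam, P, hPpsd, hPnZ, fun Z hZ => ?_⟩
  have hQt : Qᴴ = Q := hQpsd.1
  set c : ℝ := Z.trace with hcdef
  -- expand the square
  have e1 : (Z - P * Z * P) * (Z - P * Z * P)
      = Z * Z - Z * (P * Z * P) - (P * Z * P) * Z + (P * Z * P) * (P * Z * P) := by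
    noncomm_ring
  have t_ab : (Z * (P * Z * P)).trace = (Z * P * Z * P).trace := by
    rw [show Z * (P * Z * P) = Z * P * Z * P from by noncomm_ring]
  have t_ba : ((P * Z * P) * Z).trace = (Z * P * Z * P).trace := by
    rw [Matrix.trace_mul_comm, t_ab]
  have t_bb : ((P * Z * P) * (P * Z * P)).trace = (Z * P * Z * P).trace := by
    rw [show (P * Z * P) * (P * Z * P) = (P * Z * (P * P)) * (Z * P) from by noncomm_ring, hPP]
    rw [Matrix.trace_mul_comm]
    rw [show (Z * P) * (P * Z * P) = ((Z * (P * P)) * Z) * P from by noncomm_ring, hPP]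
  have hA1 : ((Z - P * Z * P) * (Z - P * Z * P)).trace
      = (Z * Z).trace - (Z * P * Z * P).trace := by
    rw [e1, Matrix.trace_add, Matrix.trace_sub, Matrix.trace_sub, t_ab, t_ba, t_bb]
    ring
  have e2 : Z * P * Z * P = Z * Z - Z * Q * Z - Z * Z * Q + Z * Q * Z * Q := by
    rw [hPQ]; noncomm_ring
  have t_c : (Z * Q * Z).trace = (Z * Z * Q).trace := trace_mul_cycle Z Q Z
  have hA2 : ((Z - P * Z * P) * (Z - P * Z * P)).trace
      = 2 * (Z * Z * Q).trace - (Z * Q * Z * Q).trace := by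
    rw [hA1, e2, Matrix.trace_add, Matrix.trace_sub, Matrix.trace_sub, t_c]
    ring
  -- positivity facts
  have hQZQ : (Q * Z * Q).PosSemidef := by
    have := hZ.conjTranspose_mul_mul_same Q
    rwa [hQt] at this
  have hC : 0 ≤ (Z * Q * Z * Q).trace := by
    rw [show Z * Q * Z * Q = ((Z * Q * Z) * Q) from by noncomm_ring, Matrix.trace_mul_comm,
      show Q * (Z * Q * Z) = (Q * Z * Q) * Z from by noncomm_ring]
    exact trace_mul_psd_nonneg hQZQ hZ
  have hD : (Z * Z * Q).trace ≤ c * (Z * Q).trace := by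
    have h0 := trace_mul_psd_nonneg (smul_sub_sq_psd hZ) hQpsd
    rw [Matrix.sub_mul, Matrix.trace_sub, smul_mul_assoc, Matrix.trace_smul,
      smul_eq_mul] at h0
    linarith
  have hE : lam * (Z * Q).trace ≤ (Z * nZ).trace := by
    have h0 := trace_mul_psd_nonneg hZ hlamQ
    rw [Matrix.mul_sub, Matrix.trace_sub, mul_smul_comm, Matrix.trace_smul, smul_eq_mul] at h0
    linarith
  have hF : 0 ≤ (Z * Q).trace := trace_mul_psd_nonneg hZ hQpsd
  have hc0 : 0 ≤ c := psd_trace_nonneg_s12 hZ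
  rw [hA2]
  have h1 := mul_le_mul_of_nonneg_left hD hlam.le
  have h2 := mul_le_mul_of_nonneg_left hE hc0
  nlinarith [mul_nonneg hlam.le hC, hC, hlam.le, hc0, hF]

lemma trace_le_sqrt {A : Matrix (Fin d) (Fin d) ℝ} (hA : Aᵀ = A) :
    A.trace ≤ Real.sqrt d * Real.sqrt ((A * A).trace) := by
  have htr : A.trace = ∑ i, A i i := by simp [Matrix.trace, Matrix.diag]
  have h1 : A.trace ^ 2 ≤ d * (A * A).trace := by
    rw [tr_sq_eq hA, htr]
    have hcs := Finset.sum_mul_sq_le_sq_mul_sq Finset.univ (fun _ : Fin d => (1:ℝ))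
      (fun i => A i i)
    simp only [one_mul, one_pow] at hcs
    have hsum : ∑ i, (A i i) ^ 2 ≤ ∑ i, ∑ j, (A i j) ^ 2 :=
      Finset.sum_le_sum fun i _ =>
        Finset.single_le_sum (fun j _ => sq_nonneg (A i j)) (Finset.mem_univ i)
    calc (∑ i, A i i) ^ 2 ≤ (∑ _i : Fin d, (1:ℝ)) * ∑ i, (A i i) ^ 2 := hcs
      _ = d * ∑ i, (A i i) ^ 2 := by simp
      _ ≤ d * ∑ i, ∑ j, (A i j) ^ 2 := by
          apply mul_le_mul_of_nonneg_left hsum (by positivity)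
  calc A.trace ≤ |A.trace| := le_abs_self _
    _ = Real.sqrt (A.trace ^ 2) := (Real.sqrt_sq_eq_abs _).symm
    _ ≤ Real.sqrt (d * (A * A).trace) := Real.sqrt_le_sqrt h1
    _ = Real.sqrt d * Real.sqrt ((A * A).trace) := Real.sqrt_mul (by positivity) _

lemma log_det_bound (hd : 0 < d) {Z : Matrix (Fin d) (Fin d) ℝ} (hZ : Z.PosDef) {y : ℝ}
    (hy : 0 < y) :
    y * Real.log ((y⁻¹ • Z).det) ≤ 2 * d * Real.sqrt (Z.trace * y) := by
  have hcpos : 0 < Z.trace := by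
    have hdiag : ∀ i, 0 < Z i i := by
      intro i
      have hne : (Pi.single i 1 : Fin d → ℝ) ≠ 0 := by
        intro h0; have := congrFun h0 i; simp at this
      simpa using hZ.dotProduct_mulVec_pos hne
    have : (Finset.univ : Finset (Fin d)).Nonempty := ⟨⟨0, hd⟩, Finset.mem_univ _⟩
    rw [show Z.trace = ∑ i, Z i i from by simp [Matrix.trace, Matrix.diag]]
    exact Finset.sum_pos (fun i _ => hdiag i) this
  have hdetpos : 0 < (y⁻¹ • Z).det := by
    rw [det_smul]
    have := hZ.det_pos
    positivity
  have hpsd : (y⁻¹ • Z).PosSemidef := psd_smul hZ.posSemidef (inv_nonneg.mpr hy.le)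
  have htr : (y⁻¹ • Z).trace = y⁻¹ * Z.trace := by rw [Matrix.trace_smul]; rfl
  have hdle : (y⁻¹ • Z).det ≤ (y⁻¹ * Z.trace) ^ d := by
    have := det_le_trace_pow hpsd
    rwa [htr] at this
  have harg : 0 < y⁻¹ * Z.trace := by positivity
  have hlog : Real.log ((y⁻¹ • Z).det) ≤ d * Real.log (y⁻¹ * Z.trace) := by
    calc Real.log ((y⁻¹ • Z).det) ≤ Real.log ((y⁻¹ * Z.trace) ^ d) :=
          Real.log_le_log hdetpos hdle
      _ = d * Real.log (y⁻¹ * Z.trace) := by rw [Real.log_pow]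
  have hlog2 : Real.log (y⁻¹ * Z.trace) ≤ 2 * Real.sqrt (y⁻¹ * Z.trace) := by
    have h1 : Real.log (y⁻¹ * Z.trace) = 2 * Real.log (Real.sqrt (y⁻¹ * Z.trace)) := by
      rw [Real.log_sqrt harg.le]; ring
    have h2 : Real.log (Real.sqrt (y⁻¹ * Z.trace)) ≤ Real.sqrt (y⁻¹ * Z.trace) - 1 :=
      Real.log_le_sub_one_of_pos (Real.sqrt_pos.mpr harg)
    linarith [Real.sqrt_nonneg (y⁻¹ * Z.trace)]
  have hsqrt : y * Real.sqrt (y⁻¹ * Z.trace) = Real.sqrt (Z.trace * y) := by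
    rw [show Z.trace * y = y ^ 2 * (y⁻¹ * Z.trace) by field_simp]
    rw [Real.sqrt_mul (sq_nonneg y), Real.sqrt_sq hy.le]
  have hd0 : (0:ℝ) ≤ d := by positivity
  calc y * Real.log ((y⁻¹ • Z).det) ≤ y * (d * Real.log (y⁻¹ * Z.trace)) :=
        mul_le_mul_of_nonneg_left hlog hy.le
    _ ≤ y * (d * (2 * Real.sqrt (y⁻¹ * Z.trace))) := by
        apply mul_le_mul_of_nonneg_left _ hy.le
        exact mul_le_mul_of_nonneg_left hlog2 hd0
    _ = 2 * d * (y * Real.sqrt (y⁻¹ * Z.trace)) := by ring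
    _ = 2 * d * Real.sqrt (Z.trace * y) := by rw [hsqrt]

lemma tr_CS {A B : Matrix (Fin d) (Fin d) ℝ} (hA : Aᵀ = A) (hB : Bᵀ = B) :
    ((A * B).trace) ^ 2 ≤ (A * A).trace * (B * B).trace := by
  rw [tr_mul_sum, tr_sq_eq hA, tr_sq_eq hB]
  have hcs := Finset.sum_mul_sq_le_sq_mul_sq (Finset.univ : Finset (Fin d × Fin d))
    (fun p => A p.1 p.2) (fun p => B p.2 p.1)
  rw [← Finset.univ_product_univ, Finset.sum_product, Finset.sum_product,
    Finset.sum_product] at hcs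
  rw [show (∑ i : Fin d, ∑ j : Fin d, B i j ^ 2) = ∑ i : Fin d, ∑ j : Fin d, B j i ^ 2 from
    Finset.sum_comm]
  simpa using hcs


lemma nrm_nonneg (p : E d) : 0 ≤ nrm p := Real.sqrt_nonneg _

lemma nrm2_nonneg {p : E d} (h : p.2.2ᵀ = p.2.2) :
    0 ≤ p.1 ^ 2 + p.2.1 ^ 2 + (p.2.2 * p.2.2).trace :=
  add_nonneg (add_nonneg (sq_nonneg _) (sq_nonneg _)) (tr_sq_nonneg h)

lemma nrm_sq {p : E d} (h : p.2.2ᵀ = p.2.2) :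
    nrm p ^ 2 = p.1 ^ 2 + p.2.1 ^ 2 + (p.2.2 * p.2.2).trace :=
  Real.sq_sqrt (nrm2_nonneg h)

lemma cs3 (a1 a2 s1 b1 b2 s2 nu nv : ℝ) (hs1 : 0 ≤ s1) (hs2 : 0 ≤ s2)
    (hnu : 0 ≤ nu) (hnv : 0 ≤ nv) (h1 : nu ^ 2 = a1 ^ 2 + a2 ^ 2 + s1 ^ 2)
    (h2 : nv ^ 2 = b1 ^ 2 + b2 ^ 2 + s2 ^ 2) :
    a1 * b1 + a2 * b2 + s1 * s2 ≤ nu * nv := by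
  rcases eq_or_lt_of_le (mul_nonneg hnu hnv) with hz | hpos
  · have hz' : nu = 0 ∨ nv = 0 := mul_eq_zero.mp hz.symm
    rcases hz' with h0 | h0
    · have h00 : a1 ^ 2 + a2 ^ 2 + s1 ^ 2 = 0 := by rw [← h1, h0]; ring
      have ha : a1 = 0 := by nlinarith [sq_nonneg a1, sq_nonneg a2, sq_nonneg s1]
      have hb : a2 = 0 := by nlinarith [sq_nonneg a1, sq_nonneg a2, sq_nonneg s1]
      have hc : s1 = 0 := by nlinarith [sq_nonneg a1, sq_nonneg a2, sq_nonneg s1]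
      rw [ha, hb, hc]
      simpa using mul_nonneg hnu hnv
    · have h00 : b1 ^ 2 + b2 ^ 2 + s2 ^ 2 = 0 := by rw [← h2, h0]; ring
      have ha : b1 = 0 := by nlinarith [sq_nonneg b1, sq_nonneg b2, sq_nonneg s2]
      have hb : b2 = 0 := by nlinarith [sq_nonneg b1, sq_nonneg b2, sq_nonneg s2]
      have hc : s2 = 0 := by nlinarith [sq_nonneg b1, sq_nonneg b2, sq_nonneg s2]
      rw [ha, hb, hc]
      simpa using mul_nonneg hnu hnv
  · nlinarith [sq_nonneg (a1 * nv - b1 * nu), sq_nonneg (a2 * nv - b2 * nu),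
      sq_nonneg (s1 * nv - s2 * nu), hpos]

lemma ip_le_nrm {u v : E d} (hu : u.2.2ᵀ = u.2.2) (hv : v.2.2ᵀ = v.2.2) :
    ip u v ≤ nrm u * nrm v := by
  have hSu : 0 ≤ (u.2.2 * u.2.2).trace := tr_sq_nonneg hu
  have hSv : 0 ≤ (v.2.2 * v.2.2).trace := tr_sq_nonneg hv
  set T := (u.2.2 * v.2.2).trace with hTdef
  set s1 := Real.sqrt ((u.2.2 * u.2.2).trace) with hs1def
  set s2 := Real.sqrt ((v.2.2 * v.2.2).trace) with hs2def
  have hs1 : s1 ^ 2 = (u.2.2 * u.2.2).trace := Real.sq_sqrt hSu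
  have hs2 : s2 ^ 2 = (v.2.2 * v.2.2).trace := Real.sq_sqrt hSv
  have hs1n : 0 ≤ s1 := Real.sqrt_nonneg _
  have hs2n : 0 ≤ s2 := Real.sqrt_nonneg _
  have hT : T ≤ s1 * s2 := by
    have h1 : T ≤ |T| := le_abs_self _
    have h2 : |T| = Real.sqrt (T ^ 2) := (Real.sqrt_sq_eq_abs _).symm
    have h3 : Real.sqrt (T ^ 2) ≤ Real.sqrt ((u.2.2 * u.2.2).trace * (v.2.2 * v.2.2).trace) :=
      Real.sqrt_le_sqrt (tr_CS hu hv)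
    rw [Real.sqrt_mul hSu] at h3
    linarith
  set nu := nrm u with hnudef
  set nv := nrm v with hnvdef
  have hnu : nu ^ 2 = u.1 ^ 2 + u.2.1 ^ 2 + s1 ^ 2 := by rw [hs1]; exact nrm_sq hu
  have hnv : nv ^ 2 = v.1 ^ 2 + v.2.1 ^ 2 + s2 ^ 2 := by rw [hs2]; exact nrm_sq hv
  have hnun : 0 ≤ nu := nrm_nonneg u
  have hnvn : 0 ≤ nv := nrm_nonneg v
  have key : u.1 * v.1 + u.2.1 * v.2.1 + s1 * s2 ≤ nu * nv :=
    cs3 _ _ _ _ _ _ _ _ hs1n hs2n hnun hnvn hnu hnv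
  calc ip u v = u.1 * v.1 + u.2.1 * v.2.1 + T := rfl
    _ ≤ u.1 * v.1 + u.2.1 * v.2.1 + s1 * s2 := by linarith
    _ ≤ nu * nv := key

lemma nrm_add_le {u v : E d} (hu : u.2.2ᵀ = u.2.2) (hv : v.2.2ᵀ = v.2.2) :
    nrm (u + v) ≤ nrm u + nrm v := by
  have hsum : (u + v).2.2 = u.2.2 + v.2.2 := rfl
  have hsymm : (u + v).2.2ᵀ = (u + v).2.2 := by
    rw [hsum, Matrix.transpose_add, hu, hv]
  have hexp : (u + v).1 ^ 2 + (u + v).2.1 ^ 2 + ((u + v).2.2 * (u + v).2.2).trace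
      = (u.1 ^ 2 + u.2.1 ^ 2 + (u.2.2 * u.2.2).trace) + 2 * ip u v
        + (v.1 ^ 2 + v.2.1 ^ 2 + (v.2.2 * v.2.2).trace) := by
    have h1 : (u + v).1 = u.1 + v.1 := rfl
    have h2 : (u + v).2.1 = u.2.1 + v.2.1 := rfl
    rw [h1, h2, hsum, Matrix.add_mul, Matrix.mul_add, Matrix.mul_add, Matrix.trace_add,
      Matrix.trace_add, Matrix.trace_add, Matrix.trace_mul_comm v.2.2 u.2.2]
    unfold ip
    ring
  have hle : (u + v).1 ^ 2 + (u + v).2.1 ^ 2 + ((u + v).2.2 * (u + v).2.2).trace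
      ≤ (nrm u + nrm v) ^ 2 := by
    rw [hexp]
    have h3 := ip_le_nrm hu hv
    have h4 := nrm_sq hu
    have h5 := nrm_sq hv
    nlinarith
  calc nrm (u + v) = Real.sqrt ((u + v).1 ^ 2 + (u + v).2.1 ^ 2
        + ((u + v).2.2 * (u + v).2.2).trace) := rfl
    _ ≤ Real.sqrt ((nrm u + nrm v) ^ 2) := Real.sqrt_le_sqrt hle
    _ = nrm u + nrm v := Real.sqrt_sq (add_nonneg (nrm_nonneg u) (nrm_nonneg v))

lemma nrm_neg (u : E d) : nrm (-u) = nrm u := by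
  have h1 : (-u).1 = -u.1 := rfl
  have h2 : (-u).2.1 = -u.2.1 := rfl
  have h3 : (-u).2.2 = -u.2.2 := rfl
  unfold nrm
  rw [h1, h2, h3, Matrix.neg_mul, Matrix.mul_neg, neg_neg, neg_pow, neg_pow]
  ring_nf

lemma ip_sub_left (u v w : E d) : ip (u - v) w = ip u w - ip v w := by
  have h1 : (u - v).1 = u.1 - v.1 := rfl
  have h2 : (u - v).2.1 = u.2.1 - v.2.1 := rfl
  have h3 : (u - v).2.2 = u.2.2 - v.2.2 := rfl
  unfold ip
  rw [h1, h2, h3, Matrix.sub_mul, Matrix.trace_sub]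
  ring

lemma sdist_le {q s : E d} {S : Set (E d)} (hs : s ∈ S) : sdist q S ≤ nrm (q - s) :=
  csInf_le ⟨0, fun r ⟨t, _, hr⟩ => hr ▸ Real.sqrt_nonneg _⟩ ⟨s, hs, rfl⟩

lemma sdist_nonneg'' (q : E d) (S : Set (E d)) : 0 ≤ sdist q S :=
  Real.sInf_nonneg fun r ⟨t, _, hr⟩ => hr ▸ Real.sqrt_nonneg _

lemma sdist_exists (q : E d) {S : Set (E d)} (hS : S.Nonempty) {t : ℝ} (ht : 0 < t) :
    ∃ s ∈ S, nrm (q - s) < sdist q S + t := by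
  obtain ⟨s0, hs0⟩ := hS
  obtain ⟨a, ⟨s, hsS, rfl⟩, hlt⟩ :=
    Real.lt_sInf_add_pos (⟨nrm (q - s0), s0, hs0, rfl⟩ :
      Set.Nonempty {r : ℝ | ∃ s ∈ S, r = nrm (q - s)}) ht
  exact ⟨s, hsS, hlt⟩

set_option maxHeartbeats 1000000 in
/-- Theorem 3.2 (Hölderian error bound concerning `F_s` when `n_y > 0`): for
`n = (0, n_y, n_Z)` with `n_y > 0`, `n_Z ⪰ 0`, `0 < rank n_Z < d`, and any `η > 0` there is
`κ > 0` with `dist(q, F_s) ≤ κ dist(q, K_logdet)^(1/2)` for all `q ∈ {n}^⊥`, `‖q‖ ≤ η`. -/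
theorem stmt_12 (d : ℕ) (hd : 2 ≤ d) (ny : ℝ) (hny : 0 < ny)
    (nZ : Matrix (Fin d) (Fin d) ℝ) (hnZ : nZ.PosSemidef)
    (hrank_pos : 0 < nZ.rank) (hrank_lt : nZ.rank < d) :
    ∀ η : ℝ, 0 < η → ∃ κ : ℝ, 0 < κ ∧ ∀ q : E d, q.2.2.IsSymm →
      ip q (0, ny, nZ) = 0 → nrm q ≤ η →
      sdist q {p : E d | p.1 ≤ 0 ∧ p.2.1 = 0 ∧ p.2.2.PosSemidef ∧ (p.2.2 * nZ).trace = 0}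
        ≤ κ * sdist q (Klogdet d) ^ ((1 : ℝ) / 2) := by
  intro η hη
  obtain ⟨lam, hlam, P, hPpsd, hPnZ, hkey⟩ := matrix_key nZ hnZ hrank_pos
  have hnZt : nZᵀ = nZ := symm_of_herm hnZ.1
  have hPh : Pᴴ = P := hPpsd.1
  set n : E d := ((0 : ℝ), ny, nZ) with hndef
  have hnsymm : n.2.2ᵀ = n.2.2 := hnZt
  set N : ℝ := nrm n with hNdef
  have hN0 : 0 < N := by
    have h1 : Real.sqrt (ny ^ 2) ≤ N := by
      apply Real.sqrt_le_sqrt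
      have h2 := tr_sq_nonneg hnZt
      have h3 : n.1 = 0 := rfl
      have h4 : n.2.1 = ny := rfl
      rw [h3, h4]
      linarith [h2, sq_nonneg (0:ℝ)]
    rw [Real.sqrt_sq hny.le] at h1
    linarith
  set M : ℝ := Real.sqrt d * (2 * η + 1) with hMdef
  have hM0 : 0 ≤ M := by positivity
  set C2 : ℝ := 4 * (d : ℝ) ^ 2 * M * N / ny + (η + 1) * N ^ 2 / ny ^ 2 + 2 * M * N / lam
    with hC2def
  have hC20 : 0 ≤ C2 := by positivity
  set κ : ℝ := Real.sqrt (η + 1) + Real.sqrt C2 with hkapdef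
  have hκ0 : 0 < κ := by
    have h1 : 0 < Real.sqrt (η + 1) := Real.sqrt_pos.mpr (by linarith)
    have h2 : 0 ≤ Real.sqrt C2 := Real.sqrt_nonneg _
    linarith
  refine ⟨κ, hκ0, fun q hqsymm hqn hqη => ?_⟩
  have hqt : q.2.2ᵀ = q.2.2 := hqsymm
  set Fs : Set (E d) :=
    {p : E d | p.1 ≤ 0 ∧ p.2.1 = 0 ∧ p.2.2.PosSemidef ∧ (p.2.2 * nZ).trace = 0} with hFsdef
  set ε : ℝ := sdist q (Klogdet d) with hepsdef
  have hε0 : 0 ≤ ε := sdist_nonneg'' _ _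
  have h0K : (0 : E d) ∈ Klogdet d := Or.inr ⟨le_refl 0, rfl, Matrix.PosSemidef.zero⟩
  have hεη : ε ≤ η := by
    have h1 := sdist_le (q := q) h0K
    rw [sub_zero] at h1
    exact h1.trans hqη
  have claim : ∀ t : ℝ, 0 < t → t ≤ 1 → sdist q Fs ≤ κ * Real.sqrt (ε + t) := by
    intro t ht0 ht1
    obtain ⟨p, hpK, hplt⟩ := sdist_exists q ⟨0, h0K⟩ ht0
    set δ : ℝ := nrm (q - p) with hdeltadef
    have hδ0 : 0 ≤ δ := nrm_nonneg _
    have hδlt : δ < ε + t := hplt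
    have hδle : δ ≤ η + 1 := by linarith
    -- unified facts from membership in the cone
    have hbase : 0 ≤ p.2.1 ∧ p.2.2.PosSemidef ∧
        p.1 ≤ 2 * d * Real.sqrt (p.2.2.trace * p.2.1) := by
      rcases hpK with ⟨hy1pos, hZ1pd, hx1le⟩ | ⟨hx1le, hy1eq, hZ1psd⟩
      · exact ⟨hy1pos.le, hZ1pd.posSemidef,
          hx1le.trans (log_det_bound (by omega) hZ1pd hy1pos)⟩
      · exact ⟨hy1eq.ge, hZ1psd,
          hx1le.trans (by positivity)⟩
    obtain ⟨hy1, hZ1, hxbound⟩ := hbase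
    have hZ1t : p.2.2ᵀ = p.2.2 := symm_of_herm hZ1.1
    have hsub_symm : (p - q).2.2ᵀ = (p - q).2.2 := by
      have h1 : (p - q).2.2 = p.2.2 - q.2.2 := rfl
      rw [h1, Matrix.transpose_sub, hZ1t, hqt]
    have hqp_symm : (q - p).2.2ᵀ = (q - p).2.2 := by
      have h1 : (q - p).2.2 = q.2.2 - p.2.2 := rfl
      rw [h1, Matrix.transpose_sub, hZ1t, hqt]
    have hnrmpq : nrm (p - q) = δ := by
      rw [hdeltadef, show p - q = -(q - p) from (neg_sub q p).symm, nrm_neg]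
    have hipn : ip p n ≤ δ * N := by
      have h1 : ip (p - q) n ≤ nrm (p - q) * N := ip_le_nrm hsub_symm hnsymm
      have h2 : ip (p - q) n = ip p n - ip q n := ip_sub_left p q n
      rw [hnrmpq] at h1
      rw [hqn] at h2
      linarith
    have hipn_eq : ip p n = p.2.1 * ny + (p.2.2 * nZ).trace := by
      have h1 : n.1 = 0 := rfl
      have h2 : n.2.1 = ny := rfl
      have h3 : n.2.2 = nZ := rfl
      unfold ip
      rw [h1, h2, h3]
      ring
    have htrZn0 : 0 ≤ (p.2.2 * nZ).trace := trace_mul_psd_nonneg hZ1 hnZ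
    have hy1le : p.2.1 ≤ δ * N / ny := by
      rw [le_div_iff₀ hny]
      rw [hipn_eq] at hipn
      linarith [htrZn0]
    have htrle : (p.2.2 * nZ).trace ≤ δ * N := by
      linarith [mul_nonneg hy1 hny.le]
    have hc0 : 0 ≤ p.2.2.trace := psd_trace_nonneg_s12 hZ1
    have hnrmp : nrm p ≤ 2 * η + 1 := by
      have hpq := nrm_add_le (u := q) (v := p - q) hqt hsub_symm
      rw [add_sub_cancel, hnrmpq] at hpq
      linarith
    have hcM : p.2.2.trace ≤ M := by
      have h1 : p.2.2.trace ≤ Real.sqrt d * Real.sqrt ((p.2.2 * p.2.2).trace) :=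
        trace_le_sqrt hZ1t
      have h2 : Real.sqrt ((p.2.2 * p.2.2).trace) ≤ nrm p := by
        apply Real.sqrt_le_sqrt
        linarith [sq_nonneg p.1, sq_nonneg p.2.1]
      have h3 : (0:ℝ) ≤ Real.sqrt d := Real.sqrt_nonneg _
      calc p.2.2.trace ≤ Real.sqrt d * Real.sqrt ((p.2.2 * p.2.2).trace) := h1
        _ ≤ Real.sqrt d * (2 * η + 1) := by
            apply mul_le_mul_of_nonneg_left (h2.trans hnrmp) h3
        _ = M := rfl
    -- the projected point
    set W : Matrix (Fin d) (Fin d) ℝ := P * p.2.2 * P with hWdef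
    have hWpsd : W.PosSemidef := by
      have h1 := hZ1.mul_mul_conjTranspose_same P
      rwa [hPh] at h1
    have hWt : Wᵀ = W := symm_of_herm hWpsd.1
    have hWnZ : (W * nZ).trace = 0 := by
      rw [show W * nZ = P * p.2.2 * (P * nZ) from by rw [hWdef]; noncomm_ring, hPnZ,
        Matrix.mul_zero, Matrix.trace_zero]
    set s : E d := (min p.1 0, (0 : ℝ), W) with hsdef
    have hsF : s ∈ Fs := by
      rw [hFsdef]
      exact ⟨min_le_right _ _, rfl, hWpsd, hWnZ⟩
    -- bound the pieces of nrm (p - s)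
    have hmax : (p - s).1 = max p.1 0 := by
      show p.1 - min p.1 0 = max p.1 0
      rcases le_total p.1 0 with h | h
      · rw [min_eq_left h, max_eq_right h]; ring
      · rw [min_eq_right h, max_eq_left h]; ring
    have hc2' : (p - s).2.1 = p.2.1 := by show p.2.1 - 0 = p.2.1; ring
    have hc3' : (p - s).2.2 = p.2.2 - W := rfl
    have hxmax : max p.1 0 ≤ 2 * d * Real.sqrt (M * (δ * N / ny)) := by
      apply max_le _ (by positivity)
      refine hxbound.trans ?_
      apply mul_le_mul_of_nonneg_left (Real.sqrt_le_sqrt ?_) (by positivity)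
      exact mul_le_mul hcM hy1le hy1 hM0
    have hZW : ((p.2.2 - W) * (p.2.2 - W)).trace ≤ δ * (2 * M * N / lam) := by
      have h1 := hkey p.2.2 hZ1
      rw [← hWdef] at h1
      have h2 : 2 * p.2.2.trace * (p.2.2 * nZ).trace ≤ 2 * M * (δ * N) := by
        have h2a := mul_le_mul hcM htrle htrZn0 hM0
        linarith
      rw [show δ * (2 * M * N / lam) = δ * (2 * M * N) / lam from by ring,
        le_div_iff₀ hlam]
      calc ((p.2.2 - W) * (p.2.2 - W)).trace * lam
          = lam * ((p.2.2 - W) * (p.2.2 - W)).trace := by ring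
        _ ≤ 2 * p.2.2.trace * (p.2.2 * nZ).trace := h1
        _ ≤ 2 * M * (δ * N) := h2
        _ = δ * (2 * M * N) := by ring
    have hsum : (max p.1 0) ^ 2 + p.2.1 ^ 2 + ((p.2.2 - W) * (p.2.2 - W)).trace
        ≤ δ * C2 := by
      have e1 : (max p.1 0) ^ 2 ≤ δ * (4 * (d : ℝ) ^ 2 * M * N / ny) := by
        have h1 := pow_le_pow_left₀ (le_max_right p.1 0) hxmax 2
        have h2 : (2 * (d : ℝ) * Real.sqrt (M * (δ * N / ny))) ^ 2
            = 4 * (d : ℝ) ^ 2 * (M * (δ * N / ny)) := by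
          rw [mul_pow, mul_pow, Real.sq_sqrt (by positivity)]
          ring
        rw [h2] at h1
        calc (max p.1 0) ^ 2 ≤ 4 * (d : ℝ) ^ 2 * (M * (δ * N / ny)) := h1
          _ = δ * (4 * (d : ℝ) ^ 2 * M * N / ny) := by ring
      have e2 : p.2.1 ^ 2 ≤ δ * ((η + 1) * N ^ 2 / ny ^ 2) := by
        have h1 := pow_le_pow_left₀ hy1 hy1le 2
        have h2 : (δ * N / ny) ^ 2 ≤ δ * ((η + 1) * N ^ 2 / ny ^ 2) := by
          have h3 : δ * δ ≤ δ * (η + 1) := mul_le_mul_of_nonneg_left hδle hδ0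
          have h4 : (0:ℝ) ≤ N ^ 2 / ny ^ 2 := by positivity
          have h5 : (δ * N / ny) ^ 2 = δ * δ * (N ^ 2 / ny ^ 2) := by ring
          have h6 := mul_le_mul_of_nonneg_right h3 h4
          rw [h5]
          calc δ * δ * (N ^ 2 / ny ^ 2) ≤ δ * (η + 1) * (N ^ 2 / ny ^ 2) := h6
            _ = δ * ((η + 1) * N ^ 2 / ny ^ 2) := by ring
        exact h1.trans h2
      have e3 : ((p.2.2 - W) * (p.2.2 - W)).trace ≤ δ * (2 * M * N / lam) := hZW
      rw [hC2def]
      linarith [e1, e2, e3]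
    have hZWt : (p.2.2 - W)ᵀ = p.2.2 - W := by rw [Matrix.transpose_sub, hZ1t, hWt]
    have hps_symm : (p - s).2.2ᵀ = (p - s).2.2 := by rw [hc3', hZWt]
    have hnrmps : nrm (p - s) ≤ Real.sqrt δ * Real.sqrt C2 := by
      have h1 : nrm (p - s) = Real.sqrt ((max p.1 0) ^ 2 + p.2.1 ^ 2
          + ((p.2.2 - W) * (p.2.2 - W)).trace) := by
        unfold nrm
        rw [hmax, hc2', hc3']
      rw [h1, ← Real.sqrt_mul hδ0]
      exact Real.sqrt_le_sqrt hsum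
    have hq_s : nrm (q - s) ≤ δ + Real.sqrt δ * Real.sqrt C2 := by
      have h1 : q - s = (q - p) + (p - s) := (sub_add_sub_cancel q p s).symm
      rw [h1]
      have h2 := nrm_add_le (u := q - p) (v := p - s) hqp_symm hps_symm
      linarith [hnrmps]
    have hfin : nrm (q - s) ≤ κ * Real.sqrt (ε + t) := by
      have hεt0 : 0 ≤ ε + t := by linarith
      have h1 : Real.sqrt δ ≤ Real.sqrt (ε + t) := Real.sqrt_le_sqrt hδlt.le
      have h2 : δ ≤ Real.sqrt (ε + t) * Real.sqrt (η + 1) := by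
        have h3 : δ ≤ Real.sqrt δ * Real.sqrt (η + 1) := by
          have h4 : Real.sqrt δ * Real.sqrt δ = δ := Real.mul_self_sqrt hδ0
          have h5 : Real.sqrt δ ≤ Real.sqrt (η + 1) := Real.sqrt_le_sqrt hδle
          have h5b := mul_le_mul_of_nonneg_left h5 (Real.sqrt_nonneg δ)
          linarith
        have h6 := mul_le_mul_of_nonneg_right h1 (Real.sqrt_nonneg (η + 1))
        linarith
      have h7 : Real.sqrt δ * Real.sqrt C2 ≤ Real.sqrt (ε + t) * Real.sqrt C2 :=
        mul_le_mul_of_nonneg_right h1 (Real.sqrt_nonneg _)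
      calc nrm (q - s) ≤ δ + Real.sqrt δ * Real.sqrt C2 := hq_s
        _ ≤ Real.sqrt (ε + t) * Real.sqrt (η + 1) + Real.sqrt (ε + t) * Real.sqrt C2 := by
            linarith
        _ = κ * Real.sqrt (ε + t) := by rw [hkapdef]; ring
    exact (sdist_le hsF).trans hfin
  have hfinal : sdist q Fs ≤ κ * Real.sqrt ε := by
    apply le_of_forall_pos_le_add
    intro e he
    have ht0 : 0 < min 1 ((e / κ) ^ 2) := lt_min one_pos (by positivity)
    have ht1 : min 1 ((e / κ) ^ 2) ≤ 1 := min_le_left _ _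
    have h1 := claim _ ht0 ht1
    have h2 : Real.sqrt (ε + min 1 ((e / κ) ^ 2)) ≤ Real.sqrt ε
        + Real.sqrt (min 1 ((e / κ) ^ 2)) := by
      have h3 : ε + min 1 ((e / κ) ^ 2) ≤ (Real.sqrt ε + Real.sqrt (min 1 ((e / κ) ^ 2))) ^ 2 := by
        have h4 : Real.sqrt ε * Real.sqrt ε = ε := Real.mul_self_sqrt hε0
        have h5 : Real.sqrt (min 1 ((e / κ) ^ 2)) * Real.sqrt (min 1 ((e / κ) ^ 2))
            = min 1 ((e / κ) ^ 2) := Real.mul_self_sqrt ht0.le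
        have h5b : (Real.sqrt ε + Real.sqrt (min 1 ((e / κ) ^ 2))) ^ 2
            = Real.sqrt ε * Real.sqrt ε
              + 2 * (Real.sqrt ε * Real.sqrt (min 1 ((e / κ) ^ 2)))
              + Real.sqrt (min 1 ((e / κ) ^ 2)) * Real.sqrt (min 1 ((e / κ) ^ 2)) := by ring
        have h5c : 0 ≤ Real.sqrt ε * Real.sqrt (min 1 ((e / κ) ^ 2)) :=
          mul_nonneg (Real.sqrt_nonneg _) (Real.sqrt_nonneg _)
        linarith
      calc Real.sqrt (ε + min 1 ((e / κ) ^ 2))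
          ≤ Real.sqrt ((Real.sqrt ε + Real.sqrt (min 1 ((e / κ) ^ 2))) ^ 2) :=
            Real.sqrt_le_sqrt h3
        _ = Real.sqrt ε + Real.sqrt (min 1 ((e / κ) ^ 2)) :=
            Real.sqrt_sq (by positivity)
    have h6 : Real.sqrt (min 1 ((e / κ) ^ 2)) ≤ e / κ := by
      calc Real.sqrt (min 1 ((e / κ) ^ 2)) ≤ Real.sqrt ((e / κ) ^ 2) :=
            Real.sqrt_le_sqrt (min_le_right _ _)
        _ = e / κ := Real.sqrt_sq (by positivity)
    have h7 : κ * Real.sqrt (ε + min 1 ((e / κ) ^ 2)) ≤ κ * Real.sqrt ε + e := by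
      have h8 : κ * (e / κ) = e := by field_simp
      calc κ * Real.sqrt (ε + min 1 ((e / κ) ^ 2))
          ≤ κ * (Real.sqrt ε + Real.sqrt (min 1 ((e / κ) ^ 2))) :=
            mul_le_mul_of_nonneg_left h2 hκ0.le
        _ = κ * Real.sqrt ε + κ * Real.sqrt (min 1 ((e / κ) ^ 2)) := by ring
        _ ≤ κ * Real.sqrt ε + κ * (e / κ) := by
            have := mul_le_mul_of_nonneg_left h6 hκ0.le
            linarith
        _ = κ * Real.sqrt ε + e := by rw [h8]
    exact h1.trans h7
  rw [show ε ^ ((1 : ℝ) / 2) = Real.sqrt ε from (Real.sqrt_eq_rpow ε).symm]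
  exact hfinal
end
end
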